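/- arXiv:2511.00298 — 6 statements merged into one kernel-verified Lean document; each statement's English description precedes it below -/
import Mathlib

section
/- Let G₀ be a semisimple graph and M a matroid on E(G₀) with rank function r having the d-dimensional 0-extension property. Let G = (V,E) ⊆ G₀, let K ⊆ V be an M-seed of G, and let v ∈ V−K satisfy |(K+v) ∩ N_G(v)| ≥ d. Then K+v is also an M-seed of G. -/
open Finset

/-- A semisimple graph: a finite vertex set together with a set of edges
(elements of `Sym2 ν`, so loops are allowed but there are no parallel edges),
each of whose endpoints lies in the vertex set. -/
structure SSGraph (ν : Type*) [DecidableEq ν] where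
  verts : Finset ν
  edges : Finset (Sym2 ν)
  incident : ∀ e ∈ edges, ∀ x ∈ e, x ∈ verts

namespace SSGraph

variable {ν : Type*} [DecidableEq ν]

/-- The subgraph relation. -/
def Sub (G H : SSGraph ν) : Prop := G.verts ⊆ H.verts ∧ G.edges ⊆ H.edges

/-- The set of vertices of `G` adjacent to `x` (including `x` itself if there is a loop at `x`). -/
def nbrs (G : SSGraph ν) (x : ν) : Finset ν :=
  G.verts.filter (fun y => s(x, y) ∈ G.edges)

/-- The degree of a vertex: the number of incident edges, counting a loop once. -/
def deg (G : SSGraph ν) (v : ν) : ℕ := (G.edges.filter (fun e => v ∈ e)).card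

/-- The edge set of the subgraph of `G` induced by `K`. -/
def induce (G : SSGraph ν) (K : Finset ν) : Finset (Sym2 ν) :=
  G.edges ∩ K.sym2

/-- Deletion of a vertex. -/
def del (G : SSGraph ν) (u : ν) : SSGraph ν where
  verts := G.verts.erase u
  edges := G.edges.filter (fun e => u ∉ e)
  incident := by
    intro e he x hx
    simp only [mem_filter] at he
    exact mem_erase.mpr ⟨fun h => he.2 (h ▸ hx), G.incident e he.1 x hx⟩

/-- `G₂` is obtained from `G₁` by a `d`-dimensional 0-extension: add a new vertex `v`
joined to `d` vertices of `V(G₁) + v` (a loop at `v` being added if `v` is among them). -/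
def IsZeroExt (d : ℕ) (G₁ G₂ : SSGraph ν) : Prop :=
  ∃ v ∉ G₁.verts, ∃ D : Finset ν, D ⊆ insert v G₁.verts ∧ D.card = d ∧
    G₂.verts = insert v G₁.verts ∧ G₂.edges = G₁.edges ∪ D.image (fun u => s(v, u))

/-- `G₂` is obtained from `G₁` by a `d`-dimensional double 1-extension on an edge `xy`. -/
def IsDouble1Ext (d : ℕ) (G₁ G₂ : SSGraph ν) : Prop :=
  ∃ x y, s(x, y) ∈ G₁.edges ∧
  ∃ u v, u ∉ G₁.verts ∧ v ∉ G₁.verts ∧ u ≠ v ∧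
  ∃ Du Dv : Finset ν,
    Du ⊆ insert u G₁.verts ∧ x ∈ Du ∧ Du.card = d ∧
    Dv ⊆ insert v G₁.verts ∧ y ∈ Dv ∧ Dv.card = d ∧
    G₂.verts = insert u (insert v G₁.verts) ∧
    G₂.edges = insert s(u, v)
      (((G₁.edges.erase s(x, y)) ∪ Du.image (fun w => s(u, w))) ∪ Dv.image (fun w => s(v, w)))

/-- `G₂` is obtained from `G₁` by a `d`-dimensional looped 1-extension on a non-loop edge `xy`. -/
def IsLooped1Ext (d : ℕ) (G₁ G₂ : SSGraph ν) : Prop :=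
  ∃ x y, x ≠ y ∧ s(x, y) ∈ G₁.edges ∧
  ∃ v ∉ G₁.verts, ∃ D : Finset ν, D ⊆ G₁.verts ∧ x ∈ D ∧ y ∈ D ∧ D.card = d ∧
    G₂.verts = insert v G₁.verts ∧
    G₂.edges = insert s(v, v) ((G₁.edges.erase s(x, y)) ∪ D.image (fun w => s(v, w)))

end SSGraph

variable {ν : Type*} [DecidableEq ν]

/-- `r` is the rank function of a matroid on the edges. -/
structure IsRankFn (r : Finset (Sym2 ν) → ℕ) : Prop where
  empty : r ∅ = 0
  le_insert : ∀ A e, r A ≤ r (insert e A)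
  insert_le : ∀ A e, r (insert e A) ≤ r A + 1
  submodular : ∀ A B, r (A ∪ B) + r (A ∩ B) ≤ r A + r B

/-- A graph is `M`-independent if its edge set is independent in the matroid with rank function `r`. -/
def Indep (r : Finset (Sym2 ν) → ℕ) (G : SSGraph ν) : Prop := r G.edges = G.edges.card

/-- The matroid with rank function `r` on the edges of `G₀` has the `d`-dimensional
0-extension property. -/
def ZeroExtProp (d : ℕ) (r : Finset (Sym2 ν) → ℕ) (G₀ : SSGraph ν) : Prop :=
  ∀ G₁ G₂ : SSGraph ν, G₁.Sub G₀ → G₂.Sub G₀ → Indep r G₁ →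
    SSGraph.IsZeroExt d G₁ G₂ → Indep r G₂

/-- The `d`-dimensional double 1-extension property. -/
def Double1ExtProp (d : ℕ) (r : Finset (Sym2 ν) → ℕ) (G₀ : SSGraph ν) : Prop :=
  ∀ G₁ G₂ : SSGraph ν, G₁.Sub G₀ → G₂.Sub G₀ → Indep r G₁ →
    SSGraph.IsDouble1Ext d G₁ G₂ → Indep r G₂

/-- The `d`-dimensional looped 1-extension property. -/
def Looped1ExtProp (d : ℕ) (r : Finset (Sym2 ν) → ℕ) (G₀ : SSGraph ν) : Prop :=
  ∀ G₁ G₂ : SSGraph ν, G₁.Sub G₀ → G₂.Sub G₀ → Indep r G₁ →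
    SSGraph.IsLooped1Ext d G₁ G₂ → Indep r G₂

/-- `K` is an `M`-seed of `G` with respect to `d`. -/
def IsSeed (d : ℕ) (r : Finset (Sym2 ν) → ℕ) (G : SSGraph ν) (K : Finset ν) : Prop :=
  K ⊆ G.verts ∧
  r G.edges = r (G.induce K) + d * (G.verts.card - K.card) ∧
  ∀ K' : Finset ν, K ⊆ K' → K' ⊂ G.verts →
    ∃ x ∈ G.verts \ K', d ≤ ((insert x K') ∩ G.nbrs x).card


section AuxLemmas

variable {ν : Type*} [DecidableEq ν] {r : Finset (Sym2 ν) → ℕ}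

lemma rank_le_union_left (hr : IsRankFn r) (A C : Finset (Sym2 ν)) : r A ≤ r (A ∪ C) := by
  induction C using Finset.induction with
  | empty => simp
  | @insert c C _ ih =>
    calc r A ≤ r (A ∪ C) := ih
    _ ≤ r (insert c (A ∪ C)) := hr.le_insert _ _
    _ = r (A ∪ insert c C) := by rw [Finset.union_insert]

lemma rank_mono (hr : IsRankFn r) {A B : Finset (Sym2 ν)} (h : A ⊆ B) : r A ≤ r B := by
  have := rank_le_union_left hr A (B \ A)
  rwa [Finset.union_sdiff_of_subset h] at this

lemma rank_essential (hr : IsRankFn r) :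
    ∀ n (A : Finset (Sym2 ν)), A.card = n →
      (∀ e ∈ A, r (A.erase e) + 1 = r A) → r A = A.card := by
  intro n
  induction n with
  | zero =>
    intro A hA _
    rw [Finset.card_eq_zero.mp hA, hr.empty]
    simp
  | succ n ih =>
    intro A hA hess
    obtain ⟨e, he⟩ : A.Nonempty := Finset.card_pos.mp (by omega)
    have hcard : (A.erase e).card = n := by
      rw [Finset.card_erase_of_mem he]; omega
    have hsub : ∀ f ∈ A.erase e, r ((A.erase e).erase f) + 1 = r (A.erase e) := by
      intro f hf
      have hfA : f ∈ A := Finset.mem_of_mem_erase hf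
      have hfe : f ≠ e := Finset.ne_of_mem_erase hf
      have hunion : (A.erase e) ∪ (A.erase f) = A := by
        ext z
        simp only [Finset.mem_union, Finset.mem_erase]
        constructor
        · rintro (⟨_, h⟩ | ⟨_, h⟩) <;> exact h
        · intro hz
          by_cases hze : z = e
          · exact Or.inr ⟨by rw [hze]; exact fun h => hfe h.symm, hz⟩
          · exact Or.inl ⟨hze, hz⟩
      have hinter : (A.erase e) ∩ (A.erase f) = (A.erase e).erase f := by
        ext z
        simp only [Finset.mem_inter, Finset.mem_erase]
        tauto
      have hsm := hr.submodular (A.erase e) (A.erase f)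
      rw [hunion, hinter] at hsm
      have h1 := hess e he
      have h2 := hess f hfA
      have h3 : r (A.erase e) ≤ r ((A.erase e).erase f) + 1 := by
        calc r (A.erase e) = r (insert f ((A.erase e).erase f)) := by
              rw [Finset.insert_erase hf]
        _ ≤ _ := hr.insert_le _ _
      omega
    have hih := ih (A.erase e) hcard hsub
    have h1 := hess e he
    omega

lemma exists_rank_basis (hr : IsRankFn r) :
    ∀ n (A : Finset (Sym2 ν)), A.card ≤ n →
      ∃ B, B ⊆ A ∧ r B = B.card ∧ r B = r A := by
  intro n
  induction n with
  | zero =>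
    intro A hA
    refine ⟨A, Finset.Subset.refl A, ?_, rfl⟩
    rw [Finset.card_eq_zero.mp (Nat.le_zero.mp hA), hr.empty]
    simp
  | succ n ih =>
    intro A hA
    by_cases hess : ∀ e ∈ A, r (A.erase e) + 1 = r A
    · exact ⟨A, Finset.Subset.refl A, rank_essential hr A.card A rfl hess, rfl⟩
    · push_neg at hess
      obtain ⟨e, he, hne⟩ := hess
      have h1 : r A ≤ r (A.erase e) + 1 := by
        calc r A = r (insert e (A.erase e)) := by rw [Finset.insert_erase he]
        _ ≤ _ := hr.insert_le _ _
      have h2 : r (A.erase e) ≤ r A := rank_mono hr (Finset.erase_subset _ _)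
      have heq : r (A.erase e) = r A := by omega
      have hone : 1 ≤ A.card := Finset.card_pos.mpr ⟨e, he⟩
      have hcard : (A.erase e).card ≤ n := by
        rw [Finset.card_erase_of_mem he]; omega
      obtain ⟨B, hB, h3, h4⟩ := ih (A.erase e) hcard
      exact ⟨B, hB.trans (Finset.erase_subset _ _), h3, by rw [h4, heq]⟩

lemma key_step (d : ℕ) (G₀ : SSGraph ν) (hr : IsRankFn r) (hext : ZeroExtProp d r G₀)
    (G : SSGraph ν) (hG : G.Sub G₀) (K' : Finset ν) (hK' : K' ⊆ G.verts)
    (x : ν) (hxV : x ∈ G.verts) (hxK : x ∉ K')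
    (hd : d ≤ ((insert x K') ∩ G.nbrs x).card) :
    r (G.induce K') + d ≤ r (G.induce (insert x K')) := by
  obtain ⟨B, hBsub, hBind, hBrank⟩ :=
    exists_rank_basis hr (G.induce K').card (G.induce K') le_rfl
  obtain ⟨D, hDsub, hDcard⟩ := Finset.exists_subset_card_eq hd
  have hBK : ∀ e ∈ B, ∀ y ∈ e, y ∈ K' := by
    intro e heB y hy
    have h := hBsub heB
    rw [SSGraph.induce, Finset.mem_inter] at h
    exact Finset.mem_sym2_iff.mp h.2 y hy
  have hBE : B ⊆ G.edges := by
    intro e heB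
    have h := hBsub heB
    rw [SSGraph.induce, Finset.mem_inter] at h
    exact h.1
  have hDins : D ⊆ insert x K' := fun u hu => (Finset.mem_inter.mp (hDsub hu)).1
  have hDnb : ∀ u ∈ D, s(x, u) ∈ G.edges := by
    intro u hu
    have h := (Finset.mem_inter.mp (hDsub hu)).2
    rw [SSGraph.nbrs, Finset.mem_filter] at h
    exact h.2
  have hinc2 : ∀ e ∈ B ∪ D.image (fun u => s(x, u)), ∀ y ∈ e, y ∈ insert x K' := by
    intro e he y hy
    rcases Finset.mem_union.mp he with h | h
    · exact Finset.mem_insert_of_mem (hBK e h y hy)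
    · obtain ⟨u, hu, rfl⟩ := Finset.mem_image.mp h
      rcases Sym2.mem_iff.mp hy with rfl | rfl
      · exact Finset.mem_insert_self _ _
      · exact hDins hu
  set G₁ : SSGraph ν := ⟨K', B, hBK⟩ with hG₁
  set G₂ : SSGraph ν := ⟨insert x K', B ∪ D.image (fun u => s(x, u)), hinc2⟩ with hG₂
  have hG₁sub : G₁.Sub G₀ := ⟨fun y hy => hG.1 (hK' hy), fun e he => hG.2 (hBE he)⟩
  have hG₂sub : G₂.Sub G₀ := by
    constructor
    · intro y hy
      rcases Finset.mem_insert.mp hy with rfl | hy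
      · exact hG.1 hxV
      · exact hG.1 (hK' hy)
    · intro e he
      rcases Finset.mem_union.mp he with h | h
      · exact hG.2 (hBE h)
      · obtain ⟨u, hu, rfl⟩ := Finset.mem_image.mp h
        exact hG.2 (hDnb u hu)
  have hzero : SSGraph.IsZeroExt d G₁ G₂ := ⟨x, hxK, D, hDins, hDcard, rfl, rfl⟩
  have hindep2 : Indep r G₂ := hext G₁ G₂ hG₁sub hG₂sub hBind hzero
  have hdisj : Disjoint B (D.image (fun u => s(x, u))) := by
    rw [Finset.disjoint_left]
    intro e heB heI
    obtain ⟨u, hu, rfl⟩ := Finset.mem_image.mp heI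
    exact hxK (hBK _ heB x (Sym2.mem_mk_left x u))
  have himcard : (D.image (fun u => s(x, u))).card = d := by
    rw [Finset.card_image_of_injOn, hDcard]
    intro a _ b _ hab
    exact Sym2.congr_right.mp hab
  have hcard2 : G₂.edges.card = B.card + d := by
    show (B ∪ D.image (fun u => s(x, u))).card = B.card + d
    rw [Finset.card_union_of_disjoint hdisj, himcard]
  have hsub2 : G₂.edges ⊆ G.induce (insert x K') := by
    intro e he
    rw [SSGraph.induce, Finset.mem_inter]
    refine ⟨?_, Finset.mem_sym2_iff.mpr (fun y hy => hinc2 _ he y hy)⟩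
    rcases Finset.mem_union.mp he with h | h
    · exact hBE h
    · obtain ⟨u, hu, rfl⟩ := Finset.mem_image.mp h
      exact hDnb u hu
  calc r (G.induce K') + d = B.card + d := by rw [← hBrank, hBind]
  _ = r G₂.edges := by rw [hindep2, hcard2]
  _ ≤ r (G.induce (insert x K')) := rank_mono hr hsub2

lemma chain_step (d : ℕ) (G₀ : SSGraph ν) (hr : IsRankFn r) (hext : ZeroExtProp d r G₀)
    (G : SSGraph ν) (hG : G.Sub G₀) (K : Finset ν) (hK : IsSeed d r G K) :
    ∀ m (K' : Finset ν), K ⊆ K' → K' ⊆ G.verts → G.verts.card - K'.card ≤ m →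
      r (G.induce K') + d * (G.verts.card - K'.card) ≤ r G.edges := by
  have hEV : G.induce G.verts = G.edges := by
    rw [SSGraph.induce]
    refine Finset.inter_eq_left.mpr (fun e he => ?_)
    exact Finset.mem_sym2_iff.mpr (fun y hy => G.incident e he y hy)
  intro m
  induction m with
  | zero =>
    intro K' hKK' hK'V hm
    have hle := Finset.card_le_card hK'V
    have heq : K' = G.verts := Finset.eq_of_subset_of_card_le hK'V (by omega)
    rw [heq, hEV]
    simp
  | succ m ih =>
    intro K' hKK' hK'V hm
    by_cases hvEq : K' = G.verts
    · rw [hvEq, hEV]; simp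
    · have hss : K' ⊂ G.verts := Finset.ssubset_iff_subset_ne.mpr ⟨hK'V, hvEq⟩
      obtain ⟨x, hx, hdx⟩ := hK.2.2 K' hKK' hss
      rw [Finset.mem_sdiff] at hx
      have hkey := key_step d G₀ hr hext G hG K' hK'V x hx.1 hx.2 hdx
      have hcard : (insert x K').card = K'.card + 1 :=
        Finset.card_insert_of_notMem hx.2
      have hlt : K'.card < G.verts.card := Finset.card_lt_card hss
      have hih := ih (insert x K') (hKK'.trans (Finset.subset_insert x K'))
        (Finset.insert_subset hx.1 hK'V) (by omega)
      have hsplit : G.verts.card - K'.card =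
          (G.verts.card - (insert x K').card) + 1 := by omega
      calc r (G.induce K') + d * (G.verts.card - K'.card)
          = r (G.induce K') + d + d * (G.verts.card - (insert x K').card) := by
            rw [hsplit, Nat.mul_add, Nat.mul_one]; ring
      _ ≤ r (G.induce (insert x K')) + d * (G.verts.card - (insert x K').card) :=
            Nat.add_le_add_right hkey _
      _ ≤ r G.edges := hih

end AuxLemmas

/-- if `K` is an `M`-seed of `G` and `v ∈ V − K` has at least `d`
neighbours in `K + v`, then `K + v` is also an `M`-seed of `G`. -/
theorem seed_insert
    {ν : Type*} [DecidableEq ν] (d : ℕ) (G₀ : SSGraph ν)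
    (r : Finset (Sym2 ν) → ℕ) (hr : IsRankFn r) (hext : ZeroExtProp d r G₀)
    (G : SSGraph ν) (hG : G.Sub G₀) (K : Finset ν) (hK : IsSeed d r G K)
    (v : ν) (hv : v ∈ G.verts \ K) (hd : d ≤ ((insert v K) ∩ G.nbrs v).card) :
    IsSeed d r G (insert v K) := by
  rw [Finset.mem_sdiff] at hv
  obtain ⟨hvV, hvK⟩ := hv
  have hKV : K ⊆ G.verts := hK.1
  have hins : insert v K ⊆ G.verts := Finset.insert_subset hvV hKV
  have hkey := key_step d G₀ hr hext G hG K hKV v hvV hvK hd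
  have hcard : (insert v K).card = K.card + 1 := Finset.card_insert_of_notMem hvK
  have hle : (insert v K).card ≤ G.verts.card := Finset.card_le_card hins
  have hchain := chain_step d G₀ hr hext G hG K hK G.verts.card (insert v K)
    (Finset.subset_insert v K) hins (by omega)
  refine ⟨hins, ?_, ?_⟩
  · have hrank := hK.2.1
    have hsplit : d * (G.verts.card - K.card) =
        d * (G.verts.card - (insert v K).card) + d := by
      have h : G.verts.card - K.card = (G.verts.card - (insert v K).card) + 1 := by omega
      rw [h, Nat.mul_add, Nat.mul_one]
    rw [hsplit] at hrank
    generalize d * (G.verts.card - (insert v K).card) = a at hrank hchain ⊢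
    omega
  · intro K'' hsub hss
    exact hK.2.2 K'' ((Finset.subset_insert v K).trans hsub) hss
end

section
/- Let d ≥ 2, let G₀ be a semisimple graph, and let M be a matroid on E(G₀) with the d-dimensional 0-extension property whose rank is at most d·n, where n = |V(G)| for a subgraph G = (V,E) of G₀. Let t ≥ 0 be an integer and let X₀ ⊆ X₁ ⊆ ⋯ ⊆ X_t = V be sets such that for all 1 ≤ i ≤ t and every v ∈ X_i − X_{i−1}, we have |N_G(v) ∩ X_{i−1}| ≥ d. Then G has an M-seed K with |K| ≤ 2·|X₀|·d^{t+1}/(d−1). -/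
open Finset

variable {ν : Type*} [DecidableEq ν]

namespace SeedAux
section RankLemmas

variable {ν : Type*} [DecidableEq ν] {r : Finset (Sym2 ν) → ℕ}

lemma rank_union_le (hr : IsRankFn r) (A C : Finset (Sym2 ν)) :
    r (A ∪ C) ≤ r A + C.card := by
  classical
  induction C using Finset.induction_on with
  | empty => simp
  | insert e C hnotmem ih =>
    rw [Finset.union_insert]
    calc r (insert e (A ∪ C)) ≤ r (A ∪ C) + 1 := hr.insert_le _ _
    _ ≤ r A + (insert e C).card := by rw [Finset.card_insert_of_notMem hnotmem]; omega

lemma rank_le_card (hr : IsRankFn r) (A : Finset (Sym2 ν)) : r A ≤ A.card := by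
  have := rank_union_le hr ∅ A
  simpa [hr.empty] using this

lemma rank_mono (hr : IsRankFn r) {A B : Finset (Sym2 ν)} (h : A ⊆ B) : r A ≤ r B := by
  classical
  have h2 : ∀ C : Finset (Sym2 ν), r A ≤ r (A ∪ C) := by
    intro C
    induction C using Finset.induction_on with
    | empty => simp
    | insert e C hnotmem ih =>
      rw [Finset.union_insert]
      exact le_trans ih (hr.le_insert _ _)
  have := h2 B
  rwa [Finset.union_eq_right.mpr h] at this

lemma rank_indep_subset (hr : IsRankFn r) {A B : Finset (Sym2 ν)} (h : A ⊆ B)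
    (hB : r B = B.card) : r A = A.card := by
  classical
  have h1 : B = A ∪ (B \ A) := by rw [Finset.union_sdiff_of_subset h]
  have h2 : r B ≤ r A + (B \ A).card := by
    conv_lhs => rw [h1]
    exact rank_union_le hr _ _
  have h4 := rank_le_card hr A
  have h5 : (B \ A).card = B.card - A.card := Finset.card_sdiff_of_subset h
  have h6 := Finset.card_le_card h
  omega

/-- spanning lemma -/
lemma rank_span (hr : IsRankFn r) {B : Finset (Sym2 ν)} (C : Finset (Sym2 ν))
    (h : ∀ e ∈ C, r (insert e B) = r B) : r (B ∪ C) = r B := by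
  classical
  induction C using Finset.induction_on with
  | empty => simp
  | insert e C hnotmem ih =>
    have hBC : r (B ∪ C) = r B := ih (fun e he => h e (Finset.mem_insert_of_mem he))
    have hsub := hr.submodular (B ∪ C) (insert e B)
    have h1 : (B ∪ C) ∪ insert e B = insert e (B ∪ C) := by
      ext x; simp [Finset.mem_insert, Finset.mem_union]; tauto
    rw [h1] at hsub
    have h2 : B ⊆ (B ∪ C) ∩ insert e B := by
      intro x hx; simp [Finset.mem_inter, Finset.mem_union, Finset.mem_insert]; tauto
    have h3 : r B ≤ r ((B ∪ C) ∩ insert e B) := rank_mono hr h2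
    have h4 : r (insert e B) = r B := h e (Finset.mem_insert_self _ _)
    have h5 : r (B ∪ insert e C) = r (insert e (B ∪ C)) := by
      rw [Finset.union_insert]
    have h6 := hr.le_insert (B ∪ C) e
    omega

/-- key lemma: independence over a superset restricts to subsets -/
lemma rank_indep_over_subset (hr : IsRankFn r) {A A' T : Finset (Sym2 ν)}
    (hA' : A' ⊆ A) (hdisj : ∀ e ∈ T, e ∉ A) (hT : r (A ∪ T) = r A + T.card) :
    r A' + T.card ≤ r (A' ∪ T) := by
  classical
  have hsub := hr.submodular (A' ∪ T) A
  have h1 : (A' ∪ T) ∪ A = A ∪ T := by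
    ext x; simp [Finset.mem_union]; tauto
  have h2 : (A' ∪ T) ∩ A = A' := by
    ext x
    simp only [Finset.mem_inter, Finset.mem_union]
    constructor
    · rintro ⟨hx | hx, hxA⟩
      · exact hx
      · exact absurd hxA (hdisj x hx)
    · intro hx; exact ⟨Or.inl hx, hA' hx⟩
  rw [h1, h2, hT] at hsub
  omega

/-- basis extension -/
lemma rank_exists_ext (hr : IsRankFn r) :
    ∀ (n : ℕ) (A C T₀ : Finset (Sym2 ν)), T₀ ⊆ C →
    r (A ∪ T₀) = r A + T₀.card → (C \ T₀).card = n →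
    ∃ T, T₀ ⊆ T ∧ T ⊆ C ∧ r (A ∪ T) = r A + T.card ∧ r (A ∪ T) = r (A ∪ C) := by
  classical
  intro n
  induction n using Nat.strong_induction_on with
  | _ n IH =>
    intro A C T₀ hTC hind hn
    by_cases hsp : ∀ e ∈ C, r (insert e (A ∪ T₀)) = r (A ∪ T₀)
    · refine ⟨T₀, Finset.Subset.refl _, hTC, hind, ?_⟩
      have := rank_span hr C hsp
      have h1 : A ∪ T₀ ∪ C = A ∪ C := by
        ext x; simp [Finset.mem_union]
        constructor
        · rintro (h|h|h)
          · exact Or.inl h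
          · exact Or.inr (hTC h)
          · exact Or.inr h
        · tauto
      rw [h1] at this
      omega
    · push_neg at hsp
      obtain ⟨e, heC, hne⟩ := hsp
      have hle1 := hr.le_insert (A ∪ T₀) e
      have hle2 := hr.insert_le (A ∪ T₀) e
      have heq : r (insert e (A ∪ T₀)) = r (A ∪ T₀) + 1 := by omega
      have heAT : e ∉ A ∪ T₀ := by
        intro hmem
        rw [Finset.insert_eq_self.mpr hmem] at hne
        exact hne rfl
      have heT : e ∉ T₀ := fun h => heAT (Finset.mem_union_right _ h)
      have hcard : (insert e T₀).card = T₀.card + 1 := Finset.card_insert_of_notMem heT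
      have hind' : r (A ∪ insert e T₀) = r A + (insert e T₀).card := by
        rw [Finset.union_insert, heq, hcard, hind]; omega
      have hmem : e ∈ C \ T₀ := Finset.mem_sdiff.mpr ⟨heC, heT⟩
      have hmeas : (C \ insert e T₀).card < n := by
        have h1 : C \ insert e T₀ = (C \ T₀).erase e := by
          ext x; simp [Finset.mem_sdiff, Finset.mem_erase, Finset.mem_insert]; tauto
        rw [h1, Finset.card_erase_of_mem hmem, hn]
        have : 0 < (C \ T₀).card := Finset.card_pos.mpr ⟨e, hmem⟩
        omega
      obtain ⟨T, hT1, hT2, hT3, hT4⟩ := IH _ hmeas A C (insert e T₀)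
        (Finset.insert_subset heC hTC) hind' rfl
      exact ⟨T, le_trans (Finset.subset_insert _ _) hT1, hT2, hT3, hT4⟩

lemma rank_exists_basis (hr : IsRankFn r) (C : Finset (Sym2 ν)) :
    ∃ B ⊆ C, r B = B.card ∧ r B = r C := by
  obtain ⟨T, _, hT2, hT3, hT4⟩ := rank_exists_ext hr (C \ ∅).card ∅ C ∅ (Finset.empty_subset _)
    (by simp [hr.empty]) rfl
  refine ⟨T, hT2, ?_, ?_⟩ <;> simp only [Finset.empty_union] at hT3 hT4
  · rw [hT3, hr.empty]; omega
  · rw [hT4]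

end RankLemmas
end SeedAux
namespace SeedAux
section GraphLemmas

variable {ν : Type*} [DecidableEq ν]

lemma mem_induce {G : SSGraph ν} {A : Finset ν} {e : Sym2 ν} :
    e ∈ G.induce A ↔ e ∈ G.edges ∧ ∀ x ∈ e, x ∈ A := by
  simp [SSGraph.induce, Finset.mem_inter, Finset.mem_sym2_iff]

lemma induce_subset_edges (G : SSGraph ν) (A : Finset ν) : G.induce A ⊆ G.edges :=
  Finset.inter_subset_left

lemma induce_mono (G : SSGraph ν) {A B : Finset ν} (h : A ⊆ B) :
    G.induce A ⊆ G.induce B := by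
  intro e he
  rw [mem_induce] at he ⊢
  exact ⟨he.1, fun x hx => h (he.2 x hx)⟩

lemma induce_verts (G : SSGraph ν) : G.induce G.verts = G.edges := by
  ext e
  rw [mem_induce]
  exact ⟨fun h => h.1, fun h => ⟨h, G.incident e h⟩⟩

lemma mem_nbrs {G : SSGraph ν} {x u : ν} : u ∈ G.nbrs x ↔ u ∈ G.verts ∧ s(x, u) ∈ G.edges := by
  simp [SSGraph.nbrs]

lemma image_pair_card {w : ν} {D : Finset ν} :
    (D.image (fun u => s(w, u))).card = D.card := by
  apply Finset.card_image_of_injective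
  intro a b hab
  exact Sym2.congr_right.mp hab

/-- 0-extension gives: `d` edges from a new vertex `w` to `D ⊆ A` are independent over
the edges induced by `A`. -/
lemma augment_strong {d : ℕ} {G₀ G : SSGraph ν} {r : Finset (Sym2 ν) → ℕ}
    (hr : IsRankFn r) (hext : ZeroExtProp d r G₀) (hG : G.Sub G₀)
    {A : Finset ν} {w : ν} {D : Finset ν}
    (hA : A ⊆ G.verts) (hw : w ∈ G.verts) (hwA : w ∉ A)
    (hD1 : D ⊆ G.nbrs w) (hD2 : D ⊆ A) (hDcard : D.card = d) :
    r (G.induce A ∪ D.image (fun u => s(w, u))) = r (G.induce A) + d := by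
  classical
  obtain ⟨B, hB1, hB2, hB3⟩ := rank_exists_basis hr (G.induce A)
  set img := D.image (fun u => s(w, u)) with himg
  have hBmem : ∀ e ∈ B, ∀ x ∈ e, x ∈ A := by
    intro e he x hx
    exact (mem_induce.mp (hB1 he)).2 x hx
  have hG₁ : ∀ e ∈ B, ∀ x ∈ e, x ∈ A := hBmem
  let G₁ : SSGraph ν := ⟨A, B, hG₁⟩
  have hG₂inc : ∀ e ∈ B ∪ img, ∀ x ∈ e, x ∈ insert w A := by
    intro e he x hx
    rcases Finset.mem_union.mp he with h | h
    · exact Finset.mem_insert_of_mem (hBmem e h x hx)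
    · obtain ⟨u, hu, rfl⟩ := Finset.mem_image.mp h
      rcases Sym2.mem_iff.mp hx with rfl | rfl
      · exact Finset.mem_insert_self _ _
      · exact Finset.mem_insert_of_mem (hD2 hu)
  let G₂ : SSGraph ν := ⟨insert w A, B ∪ img, hG₂inc⟩
  have hSub₁ : G₁.Sub G₀ :=
    ⟨fun x hx => hG.1 (hA hx), fun e he => hG.2 (induce_subset_edges G A (hB1 he))⟩
  have himgE : ∀ e ∈ img, e ∈ G.edges := by
    intro e he
    obtain ⟨u, hu, rfl⟩ := Finset.mem_image.mp he
    exact (mem_nbrs.mp (hD1 hu)).2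
  have hSub₂ : G₂.Sub G₀ := by
    constructor
    · intro x hx
      rcases Finset.mem_insert.mp hx with rfl | h
      · exact hG.1 hw
      · exact hG.1 (hA h)
    · intro e he
      rcases Finset.mem_union.mp he with h | h
      · exact hG.2 (induce_subset_edges G A (hB1 h))
      · exact hG.2 (himgE e h)
  have hIndep₁ : Indep r G₁ := hB2
  have hZE : SSGraph.IsZeroExt d G₁ G₂ :=
    ⟨w, hwA, D, fun x hx => Finset.mem_insert_of_mem (hD2 hx), hDcard, rfl, rfl⟩
  have hIndep₂ : Indep r G₂ := hext G₁ G₂ hSub₁ hSub₂ hIndep₁ hZE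
  have hdisj : Disjoint B img := by
    rw [Finset.disjoint_right]
    intro e he heB
    obtain ⟨u, hu, rfl⟩ := Finset.mem_image.mp he
    exact hwA (hBmem _ heB w (Sym2.mem_mk_left w u))
  have hcard : (B ∪ img).card = B.card + d := by
    rw [Finset.card_union_of_disjoint hdisj, image_pair_card, hDcard]
  have hr2 : r (B ∪ img) = B.card + d := by
    have : Indep r G₂ := hIndep₂
    unfold Indep at this
    simpa [G₂, hcard] using this
  have hle : r (G.induce A ∪ img) ≤ r (G.induce A) + d := by
    calc r (G.induce A ∪ img) ≤ r (G.induce A) + img.card := rank_union_le hr _ _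
    _ = r (G.induce A) + d := by rw [image_pair_card, hDcard]
  have hge : r (G.induce A) + d ≤ r (G.induce A ∪ img) := by
    calc r (G.induce A) + d = B.card + d := by omega
    _ = r (B ∪ img) := hr2.symm
    _ ≤ r (G.induce A ∪ img) := rank_mono hr (Finset.union_subset_union_left hB1)
  omega

lemma augment {d : ℕ} {G₀ G : SSGraph ν} {r : Finset (Sym2 ν) → ℕ}
    (hr : IsRankFn r) (hext : ZeroExtProp d r G₀) (hG : G.Sub G₀)
    {A : Finset ν} {w : ν}
    (hA : A ⊆ G.verts) (hw : w ∈ G.verts) (hwA : w ∉ A)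
    (hnb : d ≤ (G.nbrs w ∩ A).card) :
    r (G.induce A) + d ≤ r (G.induce (insert w A)) := by
  classical
  obtain ⟨D, hD, hDcard⟩ := Finset.exists_subset_card_eq hnb
  have hD1 : D ⊆ G.nbrs w := hD.trans Finset.inter_subset_left
  have hD2 : D ⊆ A := hD.trans Finset.inter_subset_right
  have key := augment_strong hr hext hG hA hw hwA hD1 hD2 hDcard
  rw [← key]
  apply rank_mono hr
  apply Finset.union_subset (induce_mono G (Finset.subset_insert _ _))
  intro e he
  obtain ⟨u, hu, rfl⟩ := Finset.mem_image.mp he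
  rw [mem_induce]
  refine ⟨(mem_nbrs.mp (hD1 hu)).2, ?_⟩
  intro x hx
  rcases Sym2.mem_iff.mp hx with rfl | rfl
  · exact Finset.mem_insert_self _ _
  · exact Finset.mem_insert_of_mem (hD2 hu)

end GraphLemmas
end SeedAux
namespace SeedAux
section ChainLemmas

variable {ν : Type*} [DecidableEq ν]

omit [DecidableEq ν] in
lemma chain_mono {X : ℕ → Finset ν} {t : ℕ} (hmono : ∀ i < t, X i ⊆ X (i + 1)) :
    ∀ {i j}, i ≤ j → j ≤ t → X i ⊆ X j := by
  intro i j hij hjt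
  induction j with
  | zero =>
    have : i = 0 := Nat.le_zero.mp hij
    subst this; exact Finset.Subset.refl _
  | succ j ih =>
    rcases Nat.lt_or_ge i (j + 1) with h | h
    · have hij' : i ≤ j := Nat.lt_succ_iff.mp h
      exact (ih hij' (by omega)).trans (hmono j (by omega))
    · have : i = j + 1 := le_antisymm hij h
      subst this; exact Finset.Subset.refl _

lemma exists_next {G : SSGraph ν} {d t : ℕ} {X : ℕ → Finset ν} {W : Finset ν}
    (hmono : ∀ i < t, X i ⊆ X (i + 1)) (hXt : X t = W)
    (hnb : ∀ i < t, ∀ v ∈ X (i + 1) \ X i, d ≤ (G.nbrs v ∩ X i).card)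
    {A : Finset ν} (hX0 : X 0 ⊆ A) (hnW : ¬ W ⊆ A) :
    ∃ w ∈ W, w ∉ A ∧ d ≤ (G.nbrs w ∩ A).card := by
  classical
  have hex : ∃ i, ¬ X i ⊆ A := ⟨t, by rwa [hXt]⟩
  have hmain : ¬ X (Nat.find hex) ⊆ A := Nat.find_spec hex
  have hi₀t : Nat.find hex ≤ t := Nat.find_min' hex (by rwa [hXt])
  have hi₀0 : Nat.find hex ≠ 0 := by
    intro h; rw [h] at hmain; exact hmain hX0
  obtain ⟨j, hj⟩ := Nat.exists_eq_succ_of_ne_zero hi₀0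
  rw [hj] at hmain
  have hXj : X j ⊆ A := by
    by_contra hcon
    have := Nat.find_min hex (m := j) (by omega)
    exact this hcon
  obtain ⟨w, hw1, hw2⟩ := Finset.not_subset.mp hmain
  have hjt : j < t := by omega
  have hwj : w ∈ X (j + 1) \ X j := Finset.mem_sdiff.mpr ⟨hw1, fun h => hw2 (hXj h)⟩
  refine ⟨w, ?_, hw2, ?_⟩
  · exact (chain_mono hmono (by omega : j + 1 ≤ t) (le_refl t) |>.trans hXt.le) hw1
  · calc d ≤ (G.nbrs w ∩ X j).card := hnb j hjt w hwj
    _ ≤ (G.nbrs w ∩ A).card :=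
      Finset.card_le_card (Finset.inter_subset_inter (Finset.Subset.refl _) hXj)

lemma rank_ge_chain {d : ℕ} {G₀ G : SSGraph ν} {r : Finset (Sym2 ν) → ℕ}
    (hr : IsRankFn r) (hext : ZeroExtProp d r G₀) (hG : G.Sub G₀)
    {t : ℕ} {X : ℕ → Finset ν} {W : Finset ν} (hW : W ⊆ G.verts)
    (hmono : ∀ i < t, X i ⊆ X (i + 1)) (hXt : X t = W)
    (hnb : ∀ i < t, ∀ v ∈ X (i + 1) \ X i, d ≤ (G.nbrs v ∩ X i).card) :
    ∀ (n : ℕ) (A : Finset ν), X 0 ⊆ A → A ⊆ W → (W \ A).card = n →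
    r (G.induce A) + d * n ≤ r (G.induce W) := by
  classical
  intro n
  induction n with
  | zero =>
    intro A hX0 hAW hcard
    have : W ⊆ A := by
      intro x hx
      by_contra hcon
      have : x ∈ W \ A := Finset.mem_sdiff.mpr ⟨hx, hcon⟩
      rw [Finset.card_eq_zero] at hcard
      simp [hcard] at this
    have hAeq : A = W := Finset.Subset.antisymm hAW this
    rw [hAeq]; omega
  | succ n ih =>
    intro A hX0 hAW hcard
    have hnW : ¬ W ⊆ A := by
      intro hcon
      have : W \ A = ∅ := Finset.sdiff_eq_empty_iff_subset.mpr hcon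
      rw [this] at hcard; simp at hcard
    obtain ⟨w, hwW, hwA, hwnb⟩ := exists_next hmono hXt hnb hX0 hnW
    have haug := augment hr hext hG (hAW.trans hW) (hW hwW) hwA hwnb
    have hsub : insert w A ⊆ W := Finset.insert_subset hwW hAW
    have hcard' : (W \ insert w A).card = n := by
      have h1 : W \ insert w A = (W \ A).erase w := by
        ext x; simp [Finset.mem_sdiff, Finset.mem_erase, Finset.mem_insert]; tauto
      rw [h1, Finset.card_erase_of_mem (Finset.mem_sdiff.mpr ⟨hwW, hwA⟩), hcard]
      omega
    have := ih (insert w A) (hX0.trans (Finset.subset_insert _ _)) hsub hcard'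
    have hmul : d * (n + 1) = d * n + d := by ring
    omega

end ChainLemmas
end SeedAux
namespace SeedAux
section Batch

variable {ν : Type*} [DecidableEq ν]

lemma batch {d : ℕ} {G₀ G : SSGraph ν} {r : Finset (Sym2 ν) → ℕ}
    (hr : IsRankFn r) (hext : ZeroExtProp d r G₀) (hG : G.Sub G₀)
    {W' : Finset ν} (hW' : W' ⊆ G.verts) :
    ∀ (U : Finset ν), (∀ u ∈ U, u ∉ W' ∧ u ∈ G.verts ∧ d ≤ (G.nbrs u ∩ W').card) →
    ∀ Rt, Rt ⊆ U → ∃ (A Rlow : Finset ν) (τ σU ε q : ℕ),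
    Rt ⊆ A ∧ A ⊆ U ∧ Rlow ⊆ W' ∧
    (∀ K', Rlow ⊆ K' → K' ⊆ W' → r (G.induce K') + τ ≤ r (G.induce (K' ∪ A))) ∧
    (r (G.induce (W' ∪ U)) = r (G.induce W') + d * U.card + σU) ∧
    (r (G.induce (W' ∪ U)) + d * A.card ≤ r (G.induce W') + d * U.card + τ) ∧
    (τ = d * A.card + ε) ∧ (ε ≤ σU) ∧ (q ≤ ε) ∧
    (A.card ≤ Rt.card + σU + q) ∧
    (Rlow.card + q ≤ d * A.card + ε) := by
  classical
  intro U
  induction U using Finset.induction_on with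
  | empty =>
    intro _ Rt hRt
    refine ⟨∅, ∅, 0, 0, 0, 0, ?_, ?_, ?_, ?_, ?_, ?_, ?_, ?_, ?_, ?_, ?_⟩ <;>
      simp_all [Finset.subset_empty]
  | insert a s hanotmem ih =>
    intro hUins Rt hRt
    have ha := hUins a (Finset.mem_insert_self _ _)
    obtain ⟨haW', haV, hanb⟩ := ha
    have hUs : ∀ u ∈ s, u ∉ W' ∧ u ∈ G.verts ∧ d ≤ (G.nbrs u ∩ W').card :=
      fun u hu => hUins u (Finset.mem_insert_of_mem hu)
    have hsV : W' ∪ s ⊆ G.verts :=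
      Finset.union_subset hW' (fun u hu => (hUs u hu).2.1)
    have haP : a ∉ W' ∪ s := by
      rw [Finset.mem_union]; rintro (h | h)
      · exact haW' h
      · exact hanotmem h
    have hPins : W' ∪ insert a s = insert a (W' ∪ s) := Finset.union_insert _ _ _
    -- choose supports
    obtain ⟨D, hD, hDcard⟩ := Finset.exists_subset_card_eq hanb
    have hD1 : D ⊆ G.nbrs a := hD.trans Finset.inter_subset_left
    have hD2 : D ⊆ W' := hD.trans Finset.inter_subset_right
    set T₀ := D.image (fun u => s(a, u)) with hT₀def
    have hT₀card : T₀.card = d := by rw [hT₀def, image_pair_card, hDcard]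
    have haug := augment_strong hr hext hG hsV haV haP hD1
      (hD2.trans Finset.subset_union_left) hDcard
    set C := G.induce (insert a (W' ∪ s)) \ G.induce (W' ∪ s) with hCdef
    have hT₀C : T₀ ⊆ C := by
      intro e he
      obtain ⟨u, hu, rfl⟩ := Finset.mem_image.mp he
      rw [hCdef, Finset.mem_sdiff]
      constructor
      · rw [mem_induce]
        refine ⟨(mem_nbrs.mp (hD1 hu)).2, ?_⟩
        intro x hx
        rcases Sym2.mem_iff.mp hx with rfl | rfl
        · exact Finset.mem_insert_self _ _
        · exact Finset.mem_insert_of_mem (Finset.mem_union_left _ (hD2 hu))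
      · rw [mem_induce]
        rintro ⟨-, hall⟩
        exact haP (hall a (Sym2.mem_mk_left _ _))
    have hind : r (G.induce (W' ∪ s) ∪ T₀) = r (G.induce (W' ∪ s)) + T₀.card := by
      rw [hT₀card]; exact haug
    obtain ⟨T, hTT₀, hTC, hTind, hTspan⟩ :=
      rank_exists_ext hr (C \ T₀).card (G.induce (W' ∪ s)) C T₀ hT₀C hind rfl
    have hPC : G.induce (W' ∪ s) ∪ C = G.induce (insert a (W' ∪ s)) := by
      rw [hCdef]
      exact Finset.union_sdiff_of_subset (induce_mono G (Finset.subset_insert _ _))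
    have hdropT : r (G.induce (insert a (W' ∪ s))) = r (G.induce (W' ∪ s)) + T.card := by
      rw [← hPC, ← hTspan, hTind]
    have hdT : d ≤ T.card := by
      have := Finset.card_le_card hTT₀
      omega
    have hTnotP : ∀ e ∈ T, e ∉ G.induce (W' ∪ s) := by
      intro e he
      have := hTC he
      rw [hCdef, Finset.mem_sdiff] at this
      exact this.2
    have hTP : ∀ e ∈ T, e ∈ G.induce (insert a (W' ∪ s)) := by
      intro e he
      have := hTC he
      rw [hCdef, Finset.mem_sdiff] at this
      exact this.1
    have hTa : ∀ e ∈ T, a ∈ e := by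
      intro e he
      by_contra hcon
      apply hTnotP e he
      have hP := hTP e he
      rw [mem_induce] at hP ⊢
      refine ⟨hP.1, fun x hx => ?_⟩
      rcases Finset.mem_insert.mp (hP.2 x hx) with rfl | h
      · exact absurd hx hcon
      · exact h
    set sameV := s.filter (fun w => s(a, w) ∈ T) with hsameVdef
    set lowV := W'.filter (fun w => s(a, w) ∈ T) with hlowVdef
    have hsamesub : sameV ⊆ s := Finset.filter_subset _ _
    have hlowsub : lowV ⊆ W' := Finset.filter_subset _ _
    have hVT : sameV.card + lowV.card ≤ T.card := by
      have hdisj : Disjoint sameV lowV := by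
        rw [Finset.disjoint_left]
        intro x hx1 hx2
        exact (hUs x (hsamesub hx1)).1 (hlowsub hx2)
      rw [← Finset.card_union_of_disjoint hdisj]
      apply Finset.card_le_card_of_injOn (fun w => s(a, w))
      · intro w hw
        rcases Finset.mem_union.mp hw with h | h
        · exact (Finset.mem_filter.mp h).2
        · exact (Finset.mem_filter.mp h).2
      · intro x _ y _ hxy
        exact Sym2.congr_right.mp hxy
    have hDlow : D ⊆ lowV := by
      intro w hw
      rw [hlowVdef, Finset.mem_filter]
      exact ⟨hD2 hw, hTT₀ (Finset.mem_image_of_mem _ hw)⟩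
    have hdlow : d ≤ lowV.card := by
      rw [← hDcard]; exact Finset.card_le_card hDlow
    have hqa : sameV.card + d ≤ T.card := by
      have := Finset.card_le_card hDlow
      omega
    have hTK : ∀ K₁ : Finset ν, lowV ⊆ K₁ → sameV ⊆ K₁ → a ∈ K₁ → T ⊆ G.induce K₁ := by
      intro K₁ hlK hsK haK e he
      have haE := hTa e he
      have hsp : s(a, Sym2.Mem.other' haE) = e := Sym2.other_spec' haE
      have hP := hTP e he
      rw [mem_induce] at hP
      rw [mem_induce]
      refine ⟨hP.1, fun x hx => ?_⟩
      rw [← hsp] at hx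
      rcases Sym2.mem_iff.mp hx with rfl | rfl
      · exact haK
      · -- x = w
        have hwP : Sym2.Mem.other' haE ∈ insert a (W' ∪ s) :=
          hP.2 _ (Sym2.other_mem' haE)
        rcases Finset.mem_insert.mp hwP with heq | hw'
        · rw [heq]; exact haK
        · rcases Finset.mem_union.mp hw' with h | h
          · apply hlK
            rw [hlowVdef, Finset.mem_filter]
            exact ⟨h, by rw [hsp]; exact he⟩
          · apply hsK
            rw [hsameVdef, Finset.mem_filter]
            exact ⟨h, by rw [hsp]; exact he⟩
    by_cases hkeep : a ∈ Rt ∨ d < T.card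
    · -- keep a
      set Rt' := (Rt.erase a) ∪ sameV with hRt'def
      have hRt's : Rt' ⊆ s := by
        apply Finset.union_subset _ hsamesub
        intro x hx
        rw [Finset.mem_erase] at hx
        rcases Finset.mem_insert.mp (hRt hx.2) with h | h
        · exact absurd h hx.1
        · exact h
      obtain ⟨A₁, Rlow₁, τ₁, σ₁, ε₁, q₁, ih1, ih2, ih3, ih4, ih5, ih6, ih7, ih8, ih9,
        ih10, ih11⟩ := ih hUs Rt' hRt's
      have haA₁ : a ∉ A₁ := fun h => hanotmem (ih2 h)
      refine ⟨insert a A₁, Rlow₁ ∪ lowV, τ₁ + T.card, σ₁ + (T.card - d), ε₁ + (T.card - d),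
        q₁ + sameV.card, ?_, ?_, ?_, ?_, ?_, ?_, ?_, ?_, ?_, ?_, ?_⟩
      · -- Rt ⊆ A
        intro x hx
        by_cases hxa : x = a
        · subst hxa; exact Finset.mem_insert_self _ _
        · exact Finset.mem_insert_of_mem (ih1 (Finset.mem_union_left _
            (Finset.mem_erase.mpr ⟨hxa, hx⟩)))
      · exact Finset.insert_subset_insert _ ih2
      · exact Finset.union_subset ih3 hlowsub
      · -- contribution
        intro K' h1 h2
        have h1' : Rlow₁ ⊆ K' := (Finset.subset_union_left).trans h1
        have hlK' : lowV ⊆ K' := (Finset.subset_union_right).trans h1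
        have hKA₁sub : K' ∪ A₁ ⊆ W' ∪ s := Finset.union_subset
          (h2.trans Finset.subset_union_left) (ih2.trans Finset.subset_union_right)
        have hTsub : T ⊆ G.induce (K' ∪ insert a A₁) := by
          apply hTK
          · exact hlK'.trans Finset.subset_union_left
          · intro x hx
            exact Finset.mem_union_right _ (Finset.mem_insert_of_mem
              (ih1 (Finset.mem_union_right _ hx)))
          · exact Finset.mem_union_right _ (Finset.mem_insert_self _ _)
        have step1 := ih4 K' h1' h2
        have step2 : r (G.induce (K' ∪ A₁)) + T.card ≤ r (G.induce (K' ∪ A₁) ∪ T) := by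
          apply rank_indep_over_subset hr (A := G.induce (W' ∪ s))
          · exact induce_mono G hKA₁sub
          · exact hTnotP
          · exact hTind
        have step3 : G.induce (K' ∪ A₁) ∪ T ⊆ G.induce (K' ∪ insert a A₁) := by
          apply Finset.union_subset _ hTsub
          exact induce_mono G (Finset.union_subset_union_right (Finset.subset_insert _ _))
        have := rank_mono hr step3
        omega
      · -- sigma equation
        rw [hPins, hdropT, ih5, Finset.card_insert_of_notMem hanotmem]
        have : d * (s.card + 1) = d * s.card + d := by ring
        omega
      · -- upper bound
        rw [hPins, hdropT, Finset.card_insert_of_notMem hanotmem,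
          Finset.card_insert_of_notMem haA₁]
        have h1 : d * (s.card + 1) = d * s.card + d := by ring
        have h2 : d * (A₁.card + 1) = d * A₁.card + d := by ring
        omega
      · -- tau equation
        rw [Finset.card_insert_of_notMem haA₁]
        have : d * (A₁.card + 1) = d * A₁.card + d := by ring
        omega
      · omega
      · -- q ≤ ε
        have : sameV.card ≤ T.card - d := by omega
        omega
      · -- A card bound
        rw [Finset.card_insert_of_notMem haA₁]
        have hRt'card : Rt'.card ≤ (Rt.erase a).card + sameV.card := by
          rw [hRt'def]; exact Finset.card_union_le _ _
        rcases hkeep with hka | hkd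
        · have h1 : (Rt.erase a).card = Rt.card - 1 := Finset.card_erase_of_mem hka
          have h2 : 1 ≤ Rt.card := Finset.card_pos.mpr ⟨a, hka⟩
          omega
        · have h1 : (Rt.erase a).card ≤ Rt.card := Finset.card_erase_le
          omega
      · -- Rlow card bound
        have h1 : (Rlow₁ ∪ lowV).card ≤ Rlow₁.card + lowV.card := Finset.card_union_le _ _
        rw [Finset.card_insert_of_notMem haA₁]
        have h2 : d * (A₁.card + 1) = d * A₁.card + d := by ring
        omega
    · -- do not keep a
      push_neg at hkeep
      obtain ⟨haRt, hTd⟩ := hkeep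
      have hTcard : T.card = d := by omega
      have hRts : Rt ⊆ s := by
        intro x hx
        rcases Finset.mem_insert.mp (hRt hx) with h | h
        · subst h; exact absurd hx haRt
        · exact h
      obtain ⟨A₁, Rlow₁, τ₁, σ₁, ε₁, q₁, ih1, ih2, ih3, ih4, ih5, ih6, ih7, ih8, ih9,
        ih10, ih11⟩ := ih hUs Rt hRts
      refine ⟨A₁, Rlow₁, τ₁, σ₁, ε₁, q₁, ih1, ih2.trans (Finset.subset_insert _ _), ih3,
        ih4, ?_, ?_, ih7, ih8, ih9, ih10, ih11⟩
      · rw [hPins, hdropT, ih5, Finset.card_insert_of_notMem hanotmem, hTcard]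
        have : d * (s.card + 1) = d * s.card + d := by ring
        omega
      · rw [hPins, hdropT, Finset.card_insert_of_notMem hanotmem, hTcard]
        have : d * (s.card + 1) = d * s.card + d := by ring
        omega

end Batch
end SeedAux
namespace SeedAux
section Main

variable {ν : Type*} [DecidableEq ν]

def geom (d : ℕ) : ℕ → ℕ
  | 0 => 0
  | (t + 1) => d * geom d t + (d - 1)

lemma geom_succ (d t : ℕ) : geom d (t + 1) = d * geom d t + (d - 1) := rfl

lemma geom_add_one (d : ℕ) (hd : 1 ≤ d) (t : ℕ) : geom d t + 1 = d ^ t := by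
  induction t with
  | zero => simp [geom]
  | succ t ih =>
    have h1 : geom d (t + 1) = d * geom d t + (d - 1) := rfl
    have h2 : d * (geom d t + 1) = d * geom d t + d := by ring
    have h3 : d * (geom d t + 1) = d * d ^ t := by rw [ih]
    have h4 : d ^ (t + 1) = d ^ t * d := pow_succ d t
    have h5 : d * d ^ t = d ^ t * d := by ring
    have h6 : (d - 1) + 1 = d := by omega
    linarith

lemma seed_arith (e p X0 σ σ' σU q ε a k' ρl ρt ρ' rl ρR : ℕ)
    (h1 : e*k' ≤ e*X0 + 2*p*σ' + p*ρ')
    (h2 : ρ' ≤ rl + ρl) (h3 : rl + q ≤ (e+1)*a + ε) (h4 : a ≤ ρt + σU + q)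
    (h5 : q ≤ ε) (h6 : ε ≤ σU) (h7 : σ' + σU = σ) (h8 : ρl + ρt ≤ ρR) :
    e*(k' + a) ≤ e*X0 + 2*((e+1)*p + e)*σ + ((e+1)*p + e)*ρR := by
  have hm1 : p*ρ' ≤ p*rl + p*ρl := by
    have h := Nat.mul_le_mul_left p h2
    have e1 : p*(rl + ρl) = p*rl + p*ρl := by ring
    linarith
  have hm2 : p*rl + p*q ≤ p*((e+1)*a) + p*ε := by
    have h := Nat.mul_le_mul_left p h3
    have e1 : p*(rl + q) = p*rl + p*q := by ring
    have e2 : p*((e+1)*a + ε) = p*((e+1)*a) + p*ε := by ring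
    linarith
  have hm3 : ((e+1)*p + e)*a ≤ ((e+1)*p + e)*ρt + ((e+1)*p + e)*σU + ((e+1)*p + e)*q := by
    have h := Nat.mul_le_mul_left ((e+1)*p + e) h4
    have e1 : ((e+1)*p + e)*(ρt + σU + q)
        = ((e+1)*p + e)*ρt + ((e+1)*p + e)*σU + ((e+1)*p + e)*q := by ring
    linarith
  have hm4 : ((e+1)*p + e)*q + p*ε ≤ p*q + ((e+1)*p + e)*ε := by
    have h1' : p*e*q ≤ p*e*ε := Nat.mul_le_mul_left _ h5
    have h2' : e*q ≤ e*ε := Nat.mul_le_mul_left _ h5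
    have e1 : ((e+1)*p + e)*q = p*e*q + p*q + e*q := by ring
    have e2 : ((e+1)*p + e)*ε = p*e*ε + p*ε + e*ε := by ring
    linarith
  have hm5 : ((e+1)*p + e)*ε ≤ ((e+1)*p + e)*σU := Nat.mul_le_mul_left _ h6
  have hm6 : ((e+1)*p + e)*ρl + ((e+1)*p + e)*ρt ≤ ((e+1)*p + e)*ρR := by
    have h := Nat.mul_le_mul_left ((e+1)*p + e) h8
    have e1 : ((e+1)*p + e)*(ρl + ρt) = ((e+1)*p + e)*ρl + ((e+1)*p + e)*ρt := by ring
    linarith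
  have hpG : p ≤ (e+1)*p + e := by
    have h1' : p ≤ (e+1)*p := Nat.le_mul_of_pos_left p (by omega)
    linarith
  have hm7 : p*ρl ≤ ((e+1)*p + e)*ρl := Nat.mul_le_mul_right _ hpG
  have hm8 : 2*p*σ' ≤ 2*((e+1)*p + e)*σ' := Nat.mul_le_mul_right _ (by omega)
  have hGa : p*((e+1)*a) + e*a = ((e+1)*p + e)*a := by ring
  have hgoal : 2*((e+1)*p + e)*σ = 2*((e+1)*p + e)*σ' + 2*((e+1)*p + e)*σU := by
    rw [← h7]; ring
  have hlhs : e*(k'+a) = e*k' + e*a := by ring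
  linarith

lemma main_lemma {e : ℕ} {G₀ G : SSGraph ν} {r : Finset (Sym2 ν) → ℕ}
    (hr : IsRankFn r) (hext : ZeroExtProp (e + 1) r G₀) (hG : G.Sub G₀) :
    ∀ (t : ℕ) (X : ℕ → Finset ν) (W : Finset ν), W ⊆ G.verts →
    (∀ i < t, X i ⊆ X (i + 1)) → X t = W →
    (∀ i < t, ∀ v ∈ X (i + 1) \ X i, e + 1 ≤ (G.nbrs v ∩ X i).card) →
    ∀ R, R ⊆ W → ∃ K, X 0 ⊆ K ∧ R ⊆ K ∧ K ⊆ W ∧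
      (r (G.induce W) + (e + 1) * K.card ≤ r (G.induce K) + (e + 1) * W.card) ∧
      (∀ σ, r (G.induce W) ≤ r (G.induce (X 0)) + (e + 1) * ((W \ X 0).card) + σ →
        e * K.card ≤ e * (X 0).card + 2 * geom (e + 1) t * σ
          + geom (e + 1) t * ((R \ X 0).card)) := by
  classical
  intro t
  induction t with
  | zero =>
    intro X W hWG hmono hXt hnb R hRW
    refine ⟨W, hXt.le, hRW, Finset.Subset.refl _, le_refl _, ?_⟩
    intro σ _
    have h0 : geom (e + 1) 0 = 0 := rfl
    rw [h0, ← hXt]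
    omega
  | succ t IH =>
    intro X W hWG hmono hXt hnb R hRW
    set d := e + 1 with hd
    -- the previous level
    set W' := X t with hW'
    have hmono' : ∀ i < t, X i ⊆ X (i + 1) := fun i hi => hmono i (by omega)
    have hnb' : ∀ i < t, ∀ v ∈ X (i + 1) \ X i, d ≤ (G.nbrs v ∩ X i).card :=
      fun i hi => hnb i (by omega)
    have hW'W : W' ⊆ W := by
      rw [← hXt]
      exact hmono t (by omega)
    have hW'G : W' ⊆ G.verts := hW'W.trans hWG
    set U := W \ W' with hU
    have hUprops : ∀ u ∈ U, u ∉ W' ∧ u ∈ G.verts ∧ d ≤ (G.nbrs u ∩ W').card := by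
      intro u hu
      rw [hU, Finset.mem_sdiff] at hu
      refine ⟨hu.2, hWG hu.1, ?_⟩
      have : u ∈ X (t + 1) \ X t := by
        rw [Finset.mem_sdiff, hXt]
        exact ⟨hu.1, hu.2⟩
      exact hnb t (by omega) u this
    obtain ⟨A, Rlow, τ, σU, ε, q, b1, b2, b3, b4, b5, b6, b7, b8, b9, b10, b11⟩ :=
      batch hr hext hG hW'G U hUprops (R ∩ U) Finset.inter_subset_right
    set R' := Rlow ∪ (R ∩ W') with hR'
    have hR'W' : R' ⊆ W' :=
      Finset.union_subset b3 Finset.inter_subset_right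
    obtain ⟨K', c1, c2, c3, c4, c5⟩ := IH X W' hW'G hmono' rfl hnb' R' hR'W'
    have hWUnion : W' ∪ U = W := Finset.union_sdiff_of_subset hW'W
    have hdisjKA : Disjoint K' A := by
      rw [Finset.disjoint_left]
      intro x hx1 hx2
      have := b2 hx2
      rw [hU, Finset.mem_sdiff] at this
      exact this.2 (c3 hx1)
    have hKc : (K' ∪ A).card = K'.card + A.card := Finset.card_union_of_disjoint hdisjKA
    have hWc : U.card + W'.card = W.card := by
      have := Finset.card_sdiff_add_card_eq_card hW'W
      rw [← hU] at this
      exact this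
    rw [hWUnion] at b5 b6
    have b4app := b4 K' ((Finset.subset_union_left).trans c2) c3
    refine ⟨K' ∪ A, c1.trans Finset.subset_union_left, ?_, ?_, ?_, ?_⟩
    · -- R ⊆ K
      intro x hx
      by_cases hxW' : x ∈ W'
      · exact Finset.mem_union_left _ (c2 (Finset.mem_union_right _
          (Finset.mem_inter.mpr ⟨hx, hxW'⟩)))
      · have hxU : x ∈ U := by
          rw [hU, Finset.mem_sdiff]
          exact ⟨hRW hx, hxW'⟩
        exact Finset.mem_union_right _ (b1 (Finset.mem_inter.mpr ⟨hx, hxU⟩))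
    · exact Finset.union_subset (c3.trans hW'W) (b2.trans (hU ▸ Finset.sdiff_subset))
    · -- rank inequality (a)
      have hrmono := rank_mono hr (induce_mono G (Finset.subset_union_left (s₁ := K') (s₂ := A)))
      have e1 : d * (K' ∪ A).card = d * K'.card + d * A.card := by rw [hKc]; ring
      have e2 : d * W.card = d * U.card + d * W'.card := by rw [← hWc]; ring
      linarith
    · -- cardinality bound (b)
      intro σ hσ
      have hX0W' : X 0 ⊆ W' := by
        rcases Nat.eq_zero_or_pos t with ht | ht
        · rw [hW', ← ht]
        · exact chain_mono hmono' (by omega) (le_refl t)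
      have hGE := rank_ge_chain hr hext hG hW'G hmono' rfl hnb'
        ((W' \ X 0).card) (X 0) (Finset.Subset.refl _) hX0W' rfl
      have hsplitset : (W \ X 0) = (W' \ X 0) ∪ U := by
        rw [hU]
        ext x
        simp only [Finset.mem_sdiff, Finset.mem_union]
        constructor
        · intro ⟨hxW, hxX0⟩
          by_cases h : x ∈ W'
          · exact Or.inl ⟨h, hxX0⟩
          · exact Or.inr ⟨hxW, h⟩
        · rintro (⟨h1, h2⟩ | ⟨h1, h2⟩)
          · exact ⟨hW'W h1, h2⟩
          · exact ⟨h1, fun hc => h2 (hX0W' hc)⟩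
      have hdisjsplit : Disjoint (W' \ X 0) U := by
        rw [hU, Finset.disjoint_left]
        intro x hx1 hx2
        rw [Finset.mem_sdiff] at hx1 hx2
        exact hx2.2 hx1.1
      have hsplitcard : (W \ X 0).card = (W' \ X 0).card + U.card := by
        rw [hsplitset]
        exact Finset.card_union_of_disjoint hdisjsplit
      have e3 : d * (W \ X 0).card = d * (W' \ X 0).card + d * U.card := by
        rw [hsplitcard]; ring
      have hσUle : σU ≤ σ := by linarith
      have hσ'eq : (σ - σU) + σU = σ := by omega
      have hσ' : r (G.induce W') ≤ r (G.induce (X 0)) + d * ((W' \ X 0).card) + (σ - σU) := by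
        linarith
      have h1 := c5 (σ - σU) hσ'
      -- endpoint counts
      have hρ'le : ((R' \ X 0)).card ≤ Rlow.card + ((R ∩ W') \ X 0).card := by
        have hsub : R' \ X 0 ⊆ Rlow ∪ ((R ∩ W') \ X 0) := by
          intro x hx
          rw [Finset.mem_sdiff, hR', Finset.mem_union] at hx
          rcases hx.1 with h | h
          · exact Finset.mem_union_left _ h
          · exact Finset.mem_union_right _ (Finset.mem_sdiff.mpr ⟨h, hx.2⟩)
        calc (R' \ X 0).card ≤ (Rlow ∪ ((R ∩ W') \ X 0)).card := Finset.card_le_card hsub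
        _ ≤ _ := Finset.card_union_le _ _
      have hρR : ((R ∩ W') \ X 0).card + (R ∩ U).card ≤ (R \ X 0).card := by
        have hdisj2 : Disjoint ((R ∩ W') \ X 0) (R ∩ U) := by
          rw [Finset.disjoint_left]
          intro x hx1 hx2
          rw [Finset.mem_sdiff, Finset.mem_inter] at hx1
          rw [Finset.mem_inter, hU, Finset.mem_sdiff] at hx2
          exact hx2.2.2 hx1.1.2
        have hsub2 : ((R ∩ W') \ X 0) ∪ (R ∩ U) ⊆ R \ X 0 := by
          intro x hx
          rcases Finset.mem_union.mp hx with h | h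
          · rw [Finset.mem_sdiff, Finset.mem_inter] at h
            exact Finset.mem_sdiff.mpr ⟨h.1.1, h.2⟩
          · rw [Finset.mem_inter, hU, Finset.mem_sdiff] at h
            exact Finset.mem_sdiff.mpr ⟨h.1, fun hc => h.2.2 (hX0W' hc)⟩
        calc ((R ∩ W') \ X 0).card + (R ∩ U).card
            = (((R ∩ W') \ X 0) ∪ (R ∩ U)).card := (Finset.card_union_of_disjoint hdisj2).symm
        _ ≤ _ := Finset.card_le_card hsub2
      have harith := seed_arith e (geom d t) (X 0).card σ (σ - σU) σU q ε A.card K'.card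
        ((R ∩ W') \ X 0).card (R ∩ U).card (R' \ X 0).card Rlow.card (R \ X 0).card
        h1 hρ'le b11 b10 b9 b8 hσ'eq hρR
      have hgeom : geom d (t + 1) = (e + 1) * geom d t + e := by
        rw [geom_succ, hd]
        simp
      rw [hgeom, hKc]
      exact harith

end Main
end SeedAux
/-- if `d ≥ 2`, the matroid has rank at most `d·|V(G)|` and there is a chain
`X₀ ⊆ X₁ ⊆ ⋯ ⊆ X_t = V(G)` such that every `v ∈ X_i − X_{i−1}` has at least `d`
neighbours in `X_{i−1}`, then `G` has an `M`-seed `K` with `|K| ≤ 2|X₀| d^{t+1}/(d−1)`. -/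
theorem exists_small_seed
    {ν : Type*} [DecidableEq ν] (d : ℕ) (hd : 2 ≤ d) (G₀ : SSGraph ν)
    (r : Finset (Sym2 ν) → ℕ) (hr : IsRankFn r) (hext : ZeroExtProp d r G₀)
    (G : SSGraph ν) (hG : G.Sub G₀)
    (hrank : r G₀.edges ≤ d * G.verts.card)
    (t : ℕ) (X : ℕ → Finset ν)
    (hmono : ∀ i < t, X i ⊆ X (i + 1)) (hXt : X t = G.verts)
    (hnb : ∀ i < t, ∀ v ∈ X (i + 1) \ X i, d ≤ (G.nbrs v ∩ X i).card) :
    ∃ K : Finset ν, IsSeed d r G K ∧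
      K.card * (d - 1) ≤ 2 * (X 0).card * d ^ (t + 1) := by
  classical
  obtain ⟨e, rfl⟩ : ∃ e, d = e + 1 := ⟨d - 1, by omega⟩
  have he : 1 ≤ e := by omega
  obtain ⟨K, k1, k2, k3, k4, k5⟩ := SeedAux.main_lemma hr hext hG t X G.verts
    (Finset.Subset.refl _) hmono hXt hnb ∅ (Finset.empty_subset _)
  have hX0V : X 0 ⊆ G.verts := k1.trans k3
  have hindV : G.induce G.verts = G.edges := SeedAux.induce_verts G
  have hge := SeedAux.rank_ge_chain hr hext hG (Finset.Subset.refl G.verts) hmono hXt hnb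
    ((G.verts \ K).card) K k1 k3 rfl
  have hcardK : (G.verts \ K).card + K.card = G.verts.card :=
    Finset.card_sdiff_add_card_eq_card k3
  have e1 : (e+1) * G.verts.card = (e+1) * (G.verts \ K).card + (e+1) * K.card := by
    rw [← hcardK]; ring
  rw [hindV] at k4 hge
  have heq : r G.edges = r (G.induce K) + (e+1) * ((G.verts \ K).card) := by
    have hle : r G.edges ≤ r (G.induce K) + (e+1) * ((G.verts \ K).card) := by linarith
    exact le_antisymm hle hge
  refine ⟨K, ⟨k3, ?_, ?_⟩, ?_⟩
  · rw [heq]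
    have h2 : (G.verts \ K).card = G.verts.card - K.card := by omega
    rw [h2]
  · intro K' hKK' hK'V
    have hX0K' : X 0 ⊆ K' := k1.trans hKK'
    have hnsub : ¬ G.verts ⊆ K' := hK'V.2
    obtain ⟨w, hwV, hwK', hwnb⟩ := SeedAux.exists_next hmono hXt hnb hX0K' hnsub
    refine ⟨w, Finset.mem_sdiff.mpr ⟨hwV, hwK'⟩, ?_⟩
    calc e+1 ≤ (G.nbrs w ∩ K').card := hwnb
    _ ≤ ((insert w K') ∩ G.nbrs w).card := Finset.card_le_card (by
        intro x hx
        rw [Finset.mem_inter] at hx ⊢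
        exact ⟨Finset.mem_insert_of_mem hx.2, hx.1⟩)
  · have hσ : r (G.induce G.verts) ≤ r (G.induce (X 0)) + (e+1) * ((G.verts \ X 0).card)
        + (e+1) * (X 0).card := by
      rw [hindV]
      have h1 : r G.edges ≤ r G₀.edges := SeedAux.rank_mono hr hG.2
      have h2 : (G.verts \ X 0).card + (X 0).card = G.verts.card :=
        Finset.card_sdiff_add_card_eq_card hX0V
      have h3 : (e+1) * G.verts.card = (e+1)*((G.verts \ X 0).card) + (e+1)*(X 0).card := by
        rw [← h2]; ring
      linarith
    have hb := k5 ((e+1) * (X 0).card) hσ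
    have h0 : (((∅ : Finset ν) \ X 0)).card = 0 := by simp
    rw [h0] at hb
    have hgeom := SeedAux.geom_add_one (e+1) (by omega) t
    have hsimp : (e + 1) - 1 = e := by omega
    rw [hsimp]
    have hpow : (e+1)^(t+1) = (e+1)^t * (e+1) := pow_succ _ _
    have hfin : e * (X 0).card + 2 * SeedAux.geom (e+1) t * ((e+1)*(X 0).card)
        ≤ 2 * (X 0).card * ((e+1)^(t+1)) := by
      rw [hpow, ← hgeom]
      have e4 : 2 * (X 0).card * ((SeedAux.geom (e+1) t + 1) * (e+1))
          = 2 * SeedAux.geom (e+1) t * ((e+1)*(X 0).card) + 2*((e+1)*(X 0).card) := by ring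
      have e5 : e * (X 0).card ≤ 2*((e+1)*(X 0).card) := by
        have : e ≤ 2*(e+1) := by omega
        calc e * (X 0).card ≤ 2*(e+1) * (X 0).card := Nat.mul_le_mul_right _ this
        _ = 2*((e+1)*(X 0).card) := by ring
      linarith
    have hz : SeedAux.geom (e+1) t * 0 = 0 := by ring
    calc K.card * e = e * K.card := by ring
    _ ≤ e * (X 0).card + 2 * SeedAux.geom (e+1) t * ((e+1)*(X 0).card) := by linarith
    _ ≤ 2 * (X 0).card * (e+1)^(t+1) := hfin
end

section
/- Let d ≥ 2 and let G = (V,E) be a graph on n ≥ 10⁵d² vertices with minimum degree δ(G) ≥ (n+d−1)/2. Then there exists a set X₀ ⊆ V with |X₀| < n/(12d) such that every vertex v ∈ V has at least d neighbours in X₀. -/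
open Finset

section Aux

variable {ν : Type*} [Fintype ν] [DecidableEq ν]

/-- Counting lemma: the number of `k`-subsets `X` of `univ` with `(A ∩ X).card = i`
is at most `C(|A|, i) * C(n - |A|, k - i)`. -/
lemma fiber_count (A : Finset ν) (k i : ℕ) :
    ((Finset.univ.powersetCard k : Finset (Finset ν)).filter
        (fun X => (A ∩ X).card = i)).card
      ≤ A.card.choose i * (Fintype.card ν - A.card).choose (k - i) := by
  classical
  have h := Finset.card_le_card_of_injOn (f := fun X : Finset ν => (X ∩ A, X \ A))
    (s := (Finset.univ.powersetCard k).filter (fun X => (A ∩ X).card = i))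
    (t := (A.powersetCard i) ×ˢ ((Finset.univ \ A).powersetCard (k - i)))
    (by
      intro X hX
      simp only [Finset.mem_coe, Finset.mem_filter, Finset.mem_powersetCard_univ] at hX
      obtain ⟨hXk, hXi⟩ := hX
      simp only [Finset.mem_coe, Finset.mem_product, Finset.mem_powersetCard]
      refine ⟨⟨Finset.inter_subset_right, by rw [Finset.inter_comm]; exact hXi⟩, ?_, ?_⟩
      · intro x hx
        simp only [Finset.mem_sdiff] at hx ⊢
        exact ⟨Finset.mem_univ x, hx.2⟩
      · have h1 := Finset.card_sdiff_add_card_inter X A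
        rw [Finset.inter_comm] at hXi
        omega)
    (by
      intro X hX Y hY hXY
      simp only [Prod.mk.injEq] at hXY
      have hX' : (X ∩ A) ∪ (X \ A) = X := by
        ext x; by_cases h : x ∈ A <;> simp [h]
      have hY' : (Y ∩ A) ∪ (Y \ A) = Y := by
        ext x; by_cases h : x ∈ A <;> simp [h]
      rw [← hX', ← hY', hXY.1, hXY.2])
  calc ((Finset.univ.powersetCard k).filter (fun X => (A ∩ X).card = i)).card
      ≤ ((A.powersetCard i) ×ˢ ((Finset.univ \ A).powersetCard (k - i))).card := h
    _ = A.card.choose i * (Fintype.card ν - A.card).choose (k - i) := by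
        rw [Finset.card_product, Finset.card_powersetCard, Finset.card_powersetCard,
          Finset.card_sdiff_of_subset (Finset.subset_univ A), Finset.card_univ]

/-- Counting lemma: bad sets for a fixed `A`. -/
lemma bad_count (A : Finset ν) (k dd : ℕ) :
    ((Finset.univ.powersetCard k : Finset (Finset ν)).filter
        (fun X => (A ∩ X).card < dd)).card
      ≤ ∑ i ∈ Finset.range dd,
          A.card.choose i * (Fintype.card ν - A.card).choose (k - i) := by
  classical
  have h := Finset.card_eq_sum_card_fiberwise
    (f := fun X : Finset ν => (A ∩ X).card)
    (s := (Finset.univ.powersetCard k).filter (fun X => (A ∩ X).card < dd))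
    (t := Finset.range dd)
    (by intro X hX; simp only [Finset.mem_coe, Finset.mem_filter] at hX; exact Finset.mem_range.2 hX.2)
  rw [h]
  refine Finset.sum_le_sum fun i _ => ?_
  calc (((Finset.univ.powersetCard k).filter (fun X => (A ∩ X).card < dd)).filter
          (fun X => (A ∩ X).card = i)).card
      ≤ ((Finset.univ.powersetCard k).filter (fun X => (A ∩ X).card = i)).card := by
        apply Finset.card_le_card
        intro X hX
        simp only [Finset.mem_filter] at hX ⊢
        exact ⟨hX.1.1, hX.2⟩
    _ ≤ _ := fiber_count A k i

end Aux

set_option maxHeartbeats 1000000 in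
/-- The key arithmetic estimate. -/
lemma key_arith (n d k m : ℕ) (hd : 2 ≤ d) (hn : 10 ^ 5 * d ^ 2 ≤ n)
    (hk : k = n / (13 * d)) (hm : m = (n + d) / 2) :
    n * ∑ i ∈ Finset.range d, m.choose i * (n - m).choose (k - i) < n.choose k := by
  set s := n.sqrt with hs_def
  set r := s.sqrt with hr_def
  set a := n - m with ha_def
  set L := Nat.log 2 (n * d) + 1 with hL_def
  set D := d - 1 + L with hD_def
  set T : ℕ → ℕ := fun i => m.choose i * a.choose (k - i) with hT_def
  -- basic numeric facts
  have hn' : 100000 * (d * d) ≤ n := by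
    calc 100000 * (d * d) = 10 ^ 5 * d ^ 2 := by ring
      _ ≤ n := hn
  have hdd4 : 2 * 2 ≤ d * d := Nat.mul_le_mul hd hd
  have hn4 : 400000 ≤ n := by linarith
  have hss : s * s ≤ n := by
    have h := Nat.sqrt_le' n
    simpa [pow_two] using h
  have hlt : n < (s + 1) * (s + 1) := Nat.lt_succ_sqrt n
  have hs632 : 632 ≤ s := Nat.le_sqrt.2 (by omega)
  have h316 : 316 * d ≤ s := Nat.le_sqrt.2 (by linarith)
  have hrr : r * r ≤ s := by
    have h := Nat.sqrt_le' s
    simpa [pow_two] using h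
  have hr25 : 25 ≤ r := Nat.le_sqrt.2 (by omega)
  have hsr : s < (r + 1) * (r + 1) := Nat.lt_succ_sqrt s
  have h632s : 632 * s ≤ s * s := Nat.mul_le_mul_right s hs632
  have hds : d ≤ s := by omega
  have hdn : d ≤ n := by linarith
  have hd632 : 632 * d ≤ n := by linarith
  have hk13 : k * (13 * d) ≤ n := by rw [hk]; exact Nat.div_mul_le_self n (13 * d)
  have hk13' : n < 13 * d * (k + 1) := by
    rw [hk]
    have hmod := Nat.div_add_mod n (13 * d)
    have hlt' := Nat.mod_lt n (show 0 < 13 * d by positivity)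
    calc n = 13 * d * (n / (13 * d)) + n % (13 * d) := hmod.symm
      _ < 13 * d * (n / (13 * d)) + 13 * d := by omega
      _ = 13 * d * (n / (13 * d) + 1) := by ring
  have hk24 : 24 * s < k := by
    have h1 : 316 * d * s ≤ n := le_trans (Nat.mul_le_mul_right s h316) hss
    have h2 : d * (316 * s) < d * (13 * (k + 1)) := by
      calc d * (316 * s) = 316 * d * s := by ring
        _ < 13 * d * (k + 1) := lt_of_le_of_lt h1 hk13'
        _ = d * (13 * (k + 1)) := by ring
    have h3 : 316 * s < 13 * (k + 1) := Nat.lt_of_mul_lt_mul_left h2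
    omega
  have hL2 : n * d < 2 ^ L := by
    have := Nat.lt_pow_succ_log_self (b := 2) (by norm_num) (n * d)
    simpa [hL_def] using this
  have hL8 : L ≤ 8 * r + 8 := by
    have hr2 : r + 1 ≤ 2 ^ (r + 1) := (Nat.lt_two_pow_self (n := r + 1)).le
    have hn2 : n < 2 ^ (4 * r + 4) := by
      have h1 : n < ((r + 1) * (r + 1)) * ((r + 1) * (r + 1)) := by nlinarith [hsr, hlt]
      have h2 : ((r + 1) * (r + 1)) * ((r + 1) * (r + 1))
          ≤ (2 ^ (r + 1) * 2 ^ (r + 1)) * (2 ^ (r + 1) * 2 ^ (r + 1)) :=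
        Nat.mul_le_mul (Nat.mul_le_mul hr2 hr2) (Nat.mul_le_mul hr2 hr2)
      have h3 : (2 ^ (r + 1) * 2 ^ (r + 1)) * (2 ^ (r + 1) * 2 ^ (r + 1))
          = 2 ^ (4 * r + 4) := by
        simp only [← pow_add]
        congr 1
        ring
      rw [← h3]
      exact lt_of_lt_of_le h1 h2
    have hnd : n * d < 2 ^ (8 * r + 8) := by
      have h1 : n * d ≤ n * n := Nat.mul_le_mul_left n hdn
      have h2 : n * n < 2 ^ (4 * r + 4) * 2 ^ (4 * r + 4) :=
        mul_lt_mul'' hn2 hn2 (Nat.zero_le _) (Nat.zero_le _)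
      have h3 : 2 ^ (4 * r + 4) * 2 ^ (4 * r + 4) = 2 ^ (8 * r + 8) := by
        simp only [← pow_add]
        congr 1
        ring
      rw [← h3]
      exact lt_of_le_of_lt h1 h2
    have hnd0 : n * d ≠ 0 := by positivity
    have := Nat.log_lt_of_lt_pow hnd0 hnd
    omega
  have h400 : 25 * (16 * r) ≤ 16 * s := by
    have h1 : 25 * r ≤ r * r := Nat.mul_le_mul_right r hr25
    linarith
  have hDs : 2 * D ≤ s := by omega
  have hka : 26 * k ≤ n := by
    have h1 : k * 26 ≤ k * (13 * d) := Nat.mul_le_mul_left k (by omega)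
    linarith
  have hm1 : n ≤ 2 * m := by omega
  have hm3 : 2 * m ≤ n + d := by omega
  have hman : a + m = n := by omega
  have ha2 : 2 * a ≤ n + 1 := by omega
  have hak : k ≤ a := by omega
  have hDk : D + 23 * s ≤ k := by omega
  have hDm : D ≤ m := by linarith
  have hdm : d ≤ m := by linarith
  have hs2s : 2 * s ≤ s * s := by linarith
  have hcube : (s + 1) * (s + 1) ≤ 2 * (s * s) := by nlinarith [h632s, hs632]
  -- the doubling step
  have hdouble : ∀ i, i + 1 ≤ D → 2 * T i ≤ T (i + 1) := by
    intro i hi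
    have hik : i + 1 ≤ k := by omega
    set j := k - (i + 1) with hj_def
    have hji : j + 1 = k - i := by omega
    have hja : j < a := by omega
    -- the numeric core
    have hnum : 2 * ((i + 1) * (a - j)) ≤ (m - i) * (k - i) := by
      obtain ⟨P, hP⟩ := Nat.le.dest hDm
      obtain ⟨Q, hQ⟩ := Nat.le.dest (show D ≤ k by omega)
      have hQ23 : 23 * s ≤ Q := by omega
      have hP2 : s * s ≤ 2 * P + s := by linarith
      have hP4 : s * s ≤ 4 * P := by linarith
      have hPQ : (s * s) * (23 * s) ≤ (4 * P) * Q := Nat.mul_le_mul hP4 hQ23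
      have hD1 : (2 * D) * (n + 1) ≤ s * ((s + 1) * (s + 1)) :=
        Nat.mul_le_mul hDs (by linarith)
      have h4 : 4 * (D * (n + 1)) ≤ 4 * (s * (s * s)) := by
        calc 4 * (D * (n + 1)) = 2 * ((2 * D) * (n + 1)) := by ring
          _ ≤ 2 * (s * ((s + 1) * (s + 1))) := Nat.mul_le_mul_left 2 hD1
          _ ≤ 2 * (s * (2 * (s * s))) :=
            Nat.mul_le_mul_left 2 (Nat.mul_le_mul_left s hcube)
          _ = 4 * (s * (s * s)) := by ring
      have h5 : 23 * (s * (s * s)) ≤ 4 * (P * Q) := by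
        calc 23 * (s * (s * s)) = (s * s) * (23 * s) := by ring
          _ ≤ (4 * P) * Q := hPQ
          _ = 4 * (P * Q) := by ring
      have h6 : 4 * (s * (s * s)) ≤ 23 * (s * (s * s)) :=
        Nat.mul_le_mul_right _ (by norm_num)
      have hmain : D * (n + 1) ≤ P * Q :=
        Nat.le_of_mul_le_mul_left (le_trans h4 (le_trans h6 h5)) (by norm_num)
      calc 2 * ((i + 1) * (a - j)) ≤ 2 * (D * a) :=
            Nat.mul_le_mul_left 2 (Nat.mul_le_mul hi (Nat.sub_le a j))
        _ = D * (2 * a) := by ring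
        _ ≤ D * (n + 1) := Nat.mul_le_mul_left D ha2
        _ ≤ P * Q := hmain
        _ ≤ (m - i) * (k - i) := Nat.mul_le_mul (by omega) (by omega)
    -- choose identities
    have e1 : m.choose (i + 1) * (i + 1) = m.choose i * (m - i) :=
      Nat.choose_succ_right_eq m i
    have e2 : a.choose (j + 1) * (j + 1) = a.choose j * (a - j) :=
      Nat.choose_succ_right_eq a j
    have hpos : 0 < (i + 1) * (a - j) := by
      apply Nat.mul_pos (Nat.succ_pos i)
      omega
    refine Nat.le_of_mul_le_mul_right ?_ hpos
    have hki2 : k - i = j + 1 := hji.symm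
    have lhs_eq : 2 * T i * ((i + 1) * (a - j))
        = (m.choose i * a.choose (j + 1)) * (2 * ((i + 1) * (a - j))) := by
      simp only [hT_def, hki2]; ring
    have rhs_eq : T (i + 1) * ((i + 1) * (a - j))
        = (m.choose i * a.choose (j + 1)) * ((m - i) * (j + 1)) := by
      simp only [hT_def, ← hj_def]
      calc m.choose (i + 1) * a.choose j * ((i + 1) * (a - j))
          = (m.choose (i + 1) * (i + 1)) * (a.choose j * (a - j)) := by ring
        _ = (m.choose i * (m - i)) * (a.choose (j + 1) * (j + 1)) := by rw [e1, ← e2]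
        _ = (m.choose i * a.choose (j + 1)) * ((m - i) * (j + 1)) := by ring
    rw [lhs_eq, rhs_eq]
    refine Nat.mul_le_mul_left _ ?_
    calc 2 * ((i + 1) * (a - j)) ≤ (m - i) * (k - i) := hnum
      _ = (m - i) * (j + 1) := by rw [hki2]
  -- positivity of T (d-1)
  have hTpos : 0 < T (d - 1) := by
    apply Nat.mul_pos
    · exact Nat.choose_pos (by omega)
    · exact Nat.choose_pos (by omega)
  -- monotonicity up to d - 1
  have hstep : ∀ i, i + 1 ≤ D → T i ≤ T (i + 1) := by
    intro i hi
    calc T i ≤ 2 * T i := by omega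
      _ ≤ T (i + 1) := hdouble i hi
  have hmono : ∀ i, i ≤ d - 1 → T i ≤ T (d - 1) := by
    intro i hi
    obtain ⟨t, ht⟩ := Nat.le.dest hi
    clear_value T
    induction t generalizing i with
    | zero =>
      simp only [Nat.add_zero] at ht
      rw [ht]
    | succ t ih =>
      calc T i ≤ T (i + 1) := hstep i (by omega)
        _ ≤ T (d - 1) := ih (i + 1) (by omega) (by omega)
  have hsum : ∑ i ∈ Finset.range d, T i ≤ d * T (d - 1) := by
    calc ∑ i ∈ Finset.range d, T i ≤ ∑ _i ∈ Finset.range d, T (d - 1) :=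
          Finset.sum_le_sum fun i hi => hmono i (by
            have := Finset.mem_range.1 hi; omega)
      _ = d * T (d - 1) := by simp [Finset.sum_const, Finset.card_range]
  have hpow : ∀ t, t ≤ L → 2 ^ t * T (d - 1) ≤ T (d - 1 + t) := by
    intro t ht
    induction t with
    | zero => simp
    | succ t ih =>
      have h1 := ih (by omega)
      calc 2 ^ (t + 1) * T (d - 1) = 2 * (2 ^ t * T (d - 1)) := by ring
        _ ≤ 2 * T (d - 1 + t) := Nat.mul_le_mul_left 2 h1
        _ ≤ T (d - 1 + t + 1) := hdouble _ (by omega)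
        _ = T (d - 1 + (t + 1)) := by rw [Nat.add_assoc]
  have hvan : T D ≤ n.choose k := by
    have hma : m + a = n := by omega
    have hsplit : n.choose k
        = ∑ p ∈ Finset.HasAntidiagonal.antidiagonal k, m.choose p.1 * a.choose p.2 := by
      rw [← hma]
      exact Nat.add_choose_eq _ _ _
    have hmem : (D, k - D) ∈ Finset.HasAntidiagonal.antidiagonal k := by
      rw [Finset.HasAntidiagonal.mem_antidiagonal]
      simp only
      omega
    rw [hsplit]
    have hle := Finset.single_le_sum
      (f := fun p : ℕ × ℕ => m.choose p.1 * a.choose p.2)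
      (fun p _ => Nat.zero_le _) hmem
    calc T D = m.choose D * a.choose (k - D) := rfl
      _ ≤ _ := hle
  have hgoal : ∑ i ∈ Finset.range d, m.choose i * a.choose (k - i)
      = ∑ i ∈ Finset.range d, T i := Finset.sum_congr rfl fun i _ => rfl
  rw [hgoal]
  calc n * ∑ i ∈ Finset.range d, T i ≤ n * (d * T (d - 1)) :=
        Nat.mul_le_mul_left n hsum
    _ = (n * d) * T (d - 1) := by ring
    _ < 2 ^ L * T (d - 1) := mul_lt_mul_of_pos_right hL2 hTpos
    _ ≤ T (d - 1 + L) := hpow L le_rfl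
    _ = T D := by rw [hD_def]
    _ ≤ n.choose k := hvan

/-- if `d ≥ 2` and `G` is a graph on `n ≥ 10⁵d²` vertices with
minimum degree at least `(n+d−1)/2`, then there is a set `X₀` of fewer than
`n/(12d)` vertices such that every vertex has at least `d` neighbours in `X₀`. -/
theorem exists_dominating_set
    {ν : Type*} [Fintype ν] [DecidableEq ν] (d : ℕ) (hd : 2 ≤ d)
    (G : SimpleGraph ν) [DecidableRel G.Adj]
    (hn : 10 ^ 5 * d ^ 2 ≤ Fintype.card ν)
    (hδ : ∀ v : ν, Fintype.card ν + d - 1 ≤ 2 * G.degree v) :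
    ∃ X₀ : Finset ν, 12 * d * X₀.card < Fintype.card ν ∧
      ∀ v : ν, d ≤ (G.neighborFinset v ∩ X₀).card := by
  classical
  set n := Fintype.card ν with hn_def
  set k := n / (13 * d) with hk_def
  set m := (n + d) / 2 with hm_def
  -- trim neighborhoods to size exactly m
  have hmdeg : ∀ v : ν, m ≤ G.degree v := by
    intro v
    have := hδ v
    omega
  have hA : ∀ v : ν, ∃ B ⊆ G.neighborFinset v, B.card = m := by
    intro v
    refine Finset.exists_subset_card_eq ?_
    rw [SimpleGraph.card_neighborFinset_eq_degree]
    exact hmdeg v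
  choose A hA1 hA2 using hA
  -- the key counting
  have hkey := key_arith n d k m hd hn hk_def hm_def
  have hcard : (Finset.univ.powersetCard k : Finset (Finset ν)).card = n.choose k := by
    rw [Finset.card_powersetCard, Finset.card_univ]
  -- there is a good set
  have hgood : ∃ X ∈ (Finset.univ.powersetCard k : Finset (Finset ν)),
      ∀ v : ν, d ≤ ((A v) ∩ X).card := by
    by_contra hcon
    push_neg at hcon
    have hsub : (Finset.univ.powersetCard k : Finset (Finset ν)) ⊆
        Finset.univ.biUnion (fun v : ν =>
          (Finset.univ.powersetCard k).filter (fun X => ((A v) ∩ X).card < d)) := by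
      intro X hX
      obtain ⟨v, hv⟩ := hcon X hX
      exact Finset.mem_biUnion.2 ⟨v, Finset.mem_univ v, Finset.mem_filter.2 ⟨hX, hv⟩⟩
    have hle : (Finset.univ.powersetCard k : Finset (Finset ν)).card ≤
        ∑ v : ν, ((Finset.univ.powersetCard k).filter
          (fun X => ((A v) ∩ X).card < d)).card :=
      le_trans (Finset.card_le_card hsub) (Finset.card_biUnion_le)
    have hbound : ∑ v : ν, ((Finset.univ.powersetCard k).filter
        (fun X => ((A v) ∩ X).card < d)).card
        ≤ n * ∑ i ∈ Finset.range d, m.choose i * (n - m).choose (k - i) := by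
      calc ∑ v : ν, ((Finset.univ.powersetCard k).filter
            (fun X => ((A v) ∩ X).card < d)).card
          ≤ ∑ _v : ν, ∑ i ∈ Finset.range d,
              m.choose i * (n - m).choose (k - i) := by
            refine Finset.sum_le_sum fun v _ => ?_
            have := bad_count (A v) k d
            rw [hA2 v] at this
            exact this
        _ = n * ∑ i ∈ Finset.range d, m.choose i * (n - m).choose (k - i) := by
            rw [Finset.sum_const, Finset.card_univ, smul_eq_mul]
    rw [hcard] at hle
    exact lt_irrefl _ (lt_of_le_of_lt (le_trans hle hbound) hkey)
  obtain ⟨X, hXmem, hX⟩ := hgood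
  have hXcard : X.card = k := Finset.mem_powersetCard_univ.1 hXmem
  refine ⟨X, ?_, ?_⟩
  · -- 12 * d * k < n
    rw [hXcard]
    have h1 : k * (13 * d) ≤ n := Nat.div_mul_le_self n (13 * d)
    have hk1 : 1 ≤ k := by
      rw [hk_def]
      refine (Nat.one_le_div_iff (by positivity)).2 ?_
      have h2 : 13 * d ≤ 10 ^ 5 * d ^ 2 := by nlinarith
      omega
    have h3 : 2 * 1 ≤ d * k := Nat.mul_le_mul hd hk1
    linarith
  · intro v
    calc d ≤ ((A v) ∩ X).card := hX v
      _ ≤ (G.neighborFinset v ∩ X).card := by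
          apply Finset.card_le_card
          exact Finset.inter_subset_inter_right (hA1 v)
end

section
/- Let G = (V,E) be a critically k-biconnected bipartite graph. Then every vertex cover of G has size at least |V|/(2k²), i.e., τ(G) ≥ |V|/(2k²). -/
/-- `(A, B)` is a bipartition of the graph `G`. -/
def SimpleGraph.IsBipartitionOf {V : Type*} (G : SimpleGraph V) (A B : Set V) : Prop :=
  A ∪ B = Set.univ ∧ Disjoint A B ∧ ∀ u v, G.Adj u v → (u ∈ A ↔ v ∈ B)

/-- A bipartite graph `G` with bipartition `(A,B)` is `k`-biconnected if `|A|,|B| ≥ k` and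
`G − W` is connected for every `W` with `|W ∩ A| ≤ k−1` and `|W ∩ B| ≤ k−1`. -/
def Biconn {V : Type*} [Finite V] (k : ℕ) (G : SimpleGraph V) (A B : Set V) : Prop :=
  G.IsBipartitionOf A B ∧ k ≤ Nat.card A ∧ k ≤ Nat.card B ∧
  ∀ W : Set V, Nat.card ↥(W ∩ A) < k → Nat.card ↥(W ∩ B) < k →
    (G.induce Wᶜ).Connected

/-- `G` is critically `k`-biconnected: `k`-biconnected, but no vertex-deleted subgraph is. -/
def CritBiconn {V : Type*} [Finite V] (k : ℕ) (G : SimpleGraph V) (A B : Set V) : Prop :=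
  Biconn k G A B ∧
  ∀ v : V, ¬ Biconn k (G.induce {v}ᶜ) (Subtype.val ⁻¹' A) (Subtype.val ⁻¹' B)

/-- `G` is `k`-connected: more than `k` vertices, and `G − W` is connected whenever `|W| < k`. -/
def KConn {V : Type*} [Finite V] (k : ℕ) (G : SimpleGraph V) : Prop :=
  k < Nat.card V ∧ ∀ W : Set V, Nat.card W < k → (G.induce Wᶜ).Connected

/-- `G` is critically `k`-connected. -/
def CritKConn {V : Type*} [Finite V] (k : ℕ) (G : SimpleGraph V) : Prop :=
  KConn k G ∧ ∀ v : V, ¬ KConn k (G.induce {v}ᶜ)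

/-- `C` is a vertex cover of `G`. -/
def IsVertexCover {V : Type*} (G : SimpleGraph V) (C : Set V) : Prop :=
  ∀ u v, G.Adj u v → u ∈ C ∨ v ∈ C

set_option linter.unusedSectionVars false
set_option linter.unusedVariables false

open Set

section Helpers

variable {V : Type*} [Finite V] (G : SimpleGraph V)

/-- If `X` splits into two nonempty parts with no edges between them,
the induced graph is not connected. -/
lemma not_connected_of_split {X F M : Set V} (hFM : F ∪ M = X)
    (hdisj : Disjoint F M) (hF : F.Nonempty) (hM : M.Nonempty)
    (hcross : ∀ f ∈ F, ∀ m ∈ M, ¬ G.Adj f m) : ¬ (G.induce X).Connected := by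
  intro hc
  obtain ⟨f, hf⟩ := hF
  obtain ⟨m, hm⟩ := hM
  have hfX : f ∈ X := hFM ▸ Or.inl hf
  have hmX : m ∈ X := hFM ▸ Or.inr hm
  have hreach := hc.preconnected ⟨f, hfX⟩ ⟨m, hmX⟩
  obtain ⟨w⟩ := hreach
  have aux : ∀ (a b : ↥X), (G.induce X).Walk a b → (a : V) ∈ F → (b : V) ∈ F := by
    intro a b p
    induction p with
    | nil => exact id
    | @cons a c b h p ih =>
      intro ha
      apply ih
      have hcX : (c : V) ∈ F ∪ M := hFM ▸ c.2
      rcases hcX with hcF | hcM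
      · exact hcF
      · exact absurd h (hcross _ ha _ hcM)
  have : m ∈ F := aux _ _ w hf
  exact (hdisj.ne_of_mem this hm) rfl

end Helpers

section Mirror

variable {V : Type*} [Finite V] {G : SimpleGraph V} {A B : Set V} {k : ℕ}

lemma SimpleGraph.IsBipartitionOf.symm (h : G.IsBipartitionOf A B) : G.IsBipartitionOf B A :=
  ⟨by rw [Set.union_comm]; exact h.1, h.2.1.symm,
    fun u v hadj => (h.2.2 v u hadj.symm).symm⟩

lemma Biconn.symm (h : Biconn k G A B) : Biconn k G B A := by
  obtain ⟨h1, h2, h3, h4⟩ := h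
  exact ⟨h1.symm, h3, h2, fun W hWB hWA => h4 W hWA hWB⟩

lemma CritBiconn.symm (h : CritBiconn k G A B) : CritBiconn k G B A := by
  obtain ⟨h1, h2⟩ := h
  exact ⟨h1.symm, fun v hb => h2 v hb.symm⟩

end Mirror
section Basic

variable {V : Type*} [Finite V] {G : SimpleGraph V} {A B : Set V} {k : ℕ}

lemma bip_nbhd (h : G.IsBipartitionOf A B) {u : V} (hu : u ∈ A) :
    G.neighborSet u ⊆ B := by
  intro w hw
  exact (h.2.2 u w hw).1 hu

lemma bip_nbhd_A_empty (h : G.IsBipartitionOf A B) {u : V} (hu : u ∈ A) :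
    G.neighborSet u ∩ A = ∅ := by
  ext w
  simp only [Set.mem_inter_iff, Set.mem_empty_iff_false, iff_false, not_and]
  intro hw hwA
  exact h.2.1.ne_of_mem hwA (bip_nbhd h hu hw) rfl

/-- Minimum degree at least `k`, for vertices of `A`. -/
lemma mindeg_A (h : Biconn k G A B) (hk : 1 ≤ k) {v : V} (hv : v ∈ A) :
    k ≤ (G.neighborSet v).ncard := by
  by_contra hlt
  push_neg at hlt
  set W := G.neighborSet v with hW
  have hWA : Nat.card ↥(W ∩ A) < k := by
    rw [Nat.card_coe_set_eq, bip_nbhd_A_empty h.1 hv]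
    simp; omega
  have hWB : Nat.card ↥(W ∩ B) < k := by
    rw [Nat.card_coe_set_eq]
    exact lt_of_le_of_lt (Set.ncard_le_ncard Set.inter_subset_left (Set.toFinite _)) hlt
  have hconn := h.2.2.2 W hWA hWB
  -- find b ∈ B outside W
  have hcard : (W ∩ B).ncard < B.ncard := by
    have h1 : (W ∩ B).ncard ≤ W.ncard :=
      Set.ncard_le_ncard Set.inter_subset_left (Set.toFinite _)
    have h2 : k ≤ B.ncard := by
      rw [← Nat.card_coe_set_eq]; exact h.2.2.1
    omega
  obtain ⟨b, hbB, hbW⟩ := Set.exists_mem_notMem_of_ncard_lt_ncard hcard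
  have hbW' : b ∉ W := fun hb => hbW ⟨hb, hbB⟩
  have hbv : b ≠ v := fun hbv => h.1.2.1.ne_of_mem hv hbB hbv.symm
  have hvW : v ∈ Wᶜ := fun hvW => G.irrefl hvW
  refine not_connected_of_split G (F := {v}) (M := Wᶜ \ {v}) ?_ ?_ ?_ ?_ ?_ hconn
  · rw [Set.union_diff_cancel']
    · simp [hvW]
    · simp [hvW]
  · exact Set.disjoint_sdiff_right.mono_left (by rfl)
  · exact ⟨v, rfl⟩
  · exact ⟨b, hbW', hbv⟩
  · rintro f rfl m ⟨hm1, _⟩ hadj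
    exact hm1 hadj

end Basic
section Pack

variable {V : Type*} [Finite V] {G : SimpleGraph V} {A B : Set V} {k : ℕ}

/-- A "separation package" at `u`: `V` splits as `F ⊔ M ⊔ (F ∪ M)ᶜ` where the separator
`(F ∪ M)ᶜ` has at most `k` vertices in `X` and at most `k-1` in `Y`, there are no edges
between `F` and `M`, and `u` has neighbors in both `F` and `M`. -/
def HasPack {V : Type*} (G : SimpleGraph V) (k : ℕ) (X Y : Set V) (u : V) : Prop :=
  ∃ F M : Set V, Disjoint F M ∧ (∀ f ∈ F, ∀ m ∈ M, ¬ G.Adj f m) ∧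
    (G.neighborSet u ∩ F).Nonempty ∧ (G.neighborSet u ∩ M).Nonempty ∧
    ((F ∪ M)ᶜ ∩ X).ncard ≤ k ∧ ((F ∪ M)ᶜ ∩ Y).ncard ≤ k - 1

lemma ncard_preimage_val (S T : Set V) :
    (Subtype.val ⁻¹' T : Set ↥S).ncard = (S ∩ T).ncard := by
  rw [← Set.ncard_image_of_injective _ Subtype.val_injective, Subtype.image_preimage_coe]

lemma pack_of_crit (h : CritBiconn k G A B) (hk : 1 ≤ k) {u : V} (hu : u ∈ A)
    (hA : k + 1 ≤ A.ncard) : HasPack G k A B u := by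
  classical
  have hbip := h.1.1
  have hnb := h.2 u
  -- the deleted graph still has a bipartition with large parts
  have bip' : (G.induce {u}ᶜ).IsBipartitionOf
      (Subtype.val ⁻¹' A) (Subtype.val ⁻¹' B) := by
    refine ⟨?_, hbip.2.1.preimage _, ?_⟩
    · rw [← Set.preimage_union, hbip.1, Set.preimage_univ]
    · intro a b hadj
      exact hbip.2.2 a.1 b.1 hadj
  have cardA' : k ≤ Nat.card ↥(Subtype.val ⁻¹' A : Set ↥({u}ᶜ : Set V)) := by
    rw [Nat.card_coe_set_eq, ncard_preimage_val]
    have : ({u}ᶜ ∩ A : Set V) = A \ {u} := by ext; simp [Set.mem_diff]; tauto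
    rw [this, Set.ncard_diff_singleton_of_mem hu]
    omega
  have cardB' : k ≤ Nat.card ↥(Subtype.val ⁻¹' B : Set ↥({u}ᶜ : Set V)) := by
    rw [Nat.card_coe_set_eq, ncard_preimage_val]
    have huB : u ∉ B := fun huB => hbip.2.1.ne_of_mem hu huB rfl
    have : ({u}ᶜ ∩ B : Set V) = B := by ext w; simp; intro hw hwu; exact huB (hwu ▸ hw)
    rw [this, ← Nat.card_coe_set_eq]
    exact h.1.2.2.1
  have h4 : ¬ ∀ W : Set ↥({u}ᶜ : Set V),
      Nat.card ↥(W ∩ Subtype.val ⁻¹' A) < k → Nat.card ↥(W ∩ Subtype.val ⁻¹' B) < k →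
      ((G.induce {u}ᶜ).induce Wᶜ).Connected :=
    fun hall => hnb ⟨bip', cardA', cardB', hall⟩
  push_neg at h4
  obtain ⟨W, hWA, hWB, hnc⟩ := h4
  set Wimg : Set V := Subtype.val '' W with hWimg
  have hWimgA : (Wimg ∩ A).ncard ≤ k - 1 := by
    rw [hWimg, ← Set.image_inter_preimage, Set.ncard_image_of_injective _ Subtype.val_injective,
      ← Nat.card_coe_set_eq]
    omega
  have hWimgB : (Wimg ∩ B).ncard ≤ k - 1 := by
    rw [hWimg, ← Set.image_inter_preimage, Set.ncard_image_of_injective _ Subtype.val_injective,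
      ← Nat.card_coe_set_eq]
    omega
  have huWimg : u ∉ Wimg := by
    rintro ⟨z, -, heq⟩
    exact z.2 heq
  -- find a vertex of the doubly-deleted graph
  have hbex : ∃ b ∈ B, b ∉ Wimg := by
    have hcard : (Wimg ∩ B).ncard < B.ncard := by
      have h2 : k ≤ B.ncard := by
        rw [← Nat.card_coe_set_eq]; exact h.1.2.2.1
      omega
    obtain ⟨b, hbB, hbn⟩ := Set.exists_mem_notMem_of_ncard_lt_ncard hcard
    exact ⟨b, hbB, fun hbW => hbn ⟨hbW, hbB⟩⟩
  obtain ⟨b, hbB, hbW⟩ := hbex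
  have hbu : b ≠ u := fun hbu => hbip.2.1.ne_of_mem hu hbB hbu.symm
  have hbW' : (⟨b, hbu⟩ : ↥({u}ᶜ : Set V)) ∉ W := fun hb => hbW ⟨_, hb, rfl⟩
  -- extract two unreachable vertices
  rw [SimpleGraph.connected_iff] at hnc
  have hpre : ¬ ((G.induce {u}ᶜ).induce Wᶜ).Preconnected :=
    fun hp => hnc ⟨hp, ⟨⟨⟨b, hbu⟩, hbW'⟩⟩⟩
  unfold SimpleGraph.Preconnected at hpre
  push_neg at hpre
  obtain ⟨x, y, hxy⟩ := hpre
  set φ : ↥(Wᶜ : Set ↥({u}ᶜ : Set V)) → V := fun z => z.1.1 with hφ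
  have φinj : Function.Injective φ :=
    Subtype.val_injective.comp Subtype.val_injective
  set F : Set V := φ '' {z | ((G.induce {u}ᶜ).induce Wᶜ).Reachable x z} with hF
  set M : Set V := φ '' {z | ¬ ((G.induce {u}ᶜ).induce Wᶜ).Reachable x z} with hM
  have hFMunion : F ∪ M = ({u} ∪ Wimg)ᶜ := by
    ext w
    constructor
    · rintro (⟨z, _, rfl⟩ | ⟨z, _, rfl⟩) <;>
      · simp only [Set.mem_compl_iff, Set.mem_union, Set.mem_singleton_iff]
        push_neg
        refine ⟨z.1.2, fun hw => ?_⟩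
        obtain ⟨z', hz', hzeq⟩ := hw
        exact z.2 (Subtype.val_injective hzeq ▸ hz')
    · intro hw
      simp only [Set.mem_compl_iff, Set.mem_union, Set.mem_singleton_iff] at hw
      push_neg at hw
      obtain ⟨hw1, hw2⟩ := hw
      have hzW : (⟨w, hw1⟩ : ↥({u}ᶜ : Set V)) ∉ W := fun hin => hw2 ⟨_, hin, rfl⟩
      by_cases hr : ((G.induce {u}ᶜ).induce Wᶜ).Reachable x ⟨⟨w, hw1⟩, hzW⟩
      · exact Or.inl ⟨_, hr, rfl⟩
      · exact Or.inr ⟨_, hr, rfl⟩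
  have hdisjFM : Disjoint F M := by
    rw [Set.disjoint_left]
    rintro a ⟨z₁, hz₁, rfl⟩ ⟨z₂, hz₂, heq⟩
    exact hz₂ (φinj heq ▸ hz₁)
  have hcross : ∀ f ∈ F, ∀ m ∈ M, ¬ G.Adj f m := by
    rintro f ⟨z₁, hz₁, rfl⟩ m ⟨z₂, hz₂, rfl⟩ hadj
    have hadj' : ((G.induce {u}ᶜ).induce Wᶜ).Adj z₁ z₂ := hadj
    exact hz₂ (hz₁.trans hadj'.reachable)
  have hScomp : (F ∪ M)ᶜ = {u} ∪ Wimg := by rw [hFMunion, compl_compl]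
  have cardsX : ((F ∪ M)ᶜ ∩ A).ncard ≤ k := by
    rw [hScomp, Set.union_inter_distrib_right]
    refine le_trans (Set.ncard_union_le _ _) ?_
    have h1 : ({u} ∩ A : Set V).ncard ≤ 1 := by
      refine le_trans (Set.ncard_le_ncard Set.inter_subset_left (Set.toFinite _)) ?_
      simp
    omega
  have cardsY : ((F ∪ M)ᶜ ∩ B).ncard ≤ k - 1 := by
    rw [hScomp, Set.union_inter_distrib_right]
    refine le_trans (Set.ncard_union_le _ _) ?_
    have huB : u ∉ B := fun huB => hbip.2.1.ne_of_mem hu huB rfl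
    have h1 : ({u} ∩ B : Set V) = ∅ := by
      ext w; simp; rintro rfl; exact huB
    rw [h1]
    simpa using hWimgB
  -- G minus Wimg is connected
  have hconnW : (G.induce Wimgᶜ).Connected := by
    refine h.1.2.2.2 Wimg ?_ ?_ <;> rw [Nat.card_coe_set_eq] <;> omega
  have hxF : φ x ∈ F := ⟨x, SimpleGraph.Reachable.refl x, rfl⟩
  have hyM : φ y ∈ M := ⟨y, hxy, rfl⟩
  have hFM_not_u : ∀ w ∈ F ∪ M, w ≠ u := by
    intro w hw
    rw [hFMunion] at hw
    simp only [Set.mem_compl_iff, Set.mem_union, Set.mem_singleton_iff] at hw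
    push_neg at hw
    exact hw.1
  have hunion2 : ∀ (P Q : Set V), P ∪ Q = F ∪ M → P ∪ (Q ∪ {u}) = Wimgᶜ := by
    intro P Q hPQ
    rw [← Set.union_assoc, hPQ, hFMunion]
    ext w
    simp only [Set.mem_union, Set.mem_compl_iff, Set.mem_singleton_iff]
    constructor
    · rintro (hw | rfl)
      · push_neg at hw; exact hw.2
      · exact huWimg
    · intro hw
      by_cases hwu : w = u
      · exact Or.inr hwu
      · exact Or.inl (by push_neg; exact ⟨hwu, hw⟩)
  -- u has a neighbor in F
  have hNF : (G.neighborSet u ∩ F).Nonempty := by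
    by_contra hemp
    rw [Set.not_nonempty_iff_eq_empty] at hemp
    refine not_connected_of_split G (F := F) (M := M ∪ {u})
      (hunion2 F M rfl) ?_ ⟨_, hxF⟩ ⟨u, Or.inr rfl⟩ ?_ hconnW
    · rw [Set.disjoint_union_right]
      refine ⟨hdisjFM, Set.disjoint_singleton_right.2 fun hf => hFM_not_u _ (Or.inl hf) rfl⟩
    · rintro f hf m (hm | rfl)
      · exact hcross f hf m hm
      · intro hadj
        exact Set.eq_empty_iff_forall_notMem.1 hemp f ⟨hadj.symm, hf⟩
  have hNM : (G.neighborSet u ∩ M).Nonempty := by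
    by_contra hemp
    rw [Set.not_nonempty_iff_eq_empty] at hemp
    refine not_connected_of_split G (F := M) (M := F ∪ {u})
      (hunion2 M F (Set.union_comm _ _)) ?_ ⟨_, hyM⟩ ⟨u, Or.inr rfl⟩ ?_ hconnW
    · rw [Set.disjoint_union_right]
      refine ⟨hdisjFM.symm,
        Set.disjoint_singleton_right.2 fun hf => hFM_not_u _ (Or.inr hf) rfl⟩
    · rintro f hf m (hm | rfl)
      · exact fun hadj => hcross m hm f hf hadj.symm
      · intro hadj
        exact Set.eq_empty_iff_forall_notMem.1 hemp f ⟨hadj.symm, hf⟩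
  exact ⟨F, M, hdisjFM, hcross, hNF, hNM, cardsX, cardsY⟩

end Pack
section Recursion

/-- The bound function for the counting recursion. -/
def gbound (k t : ℕ) : ℕ := if t < k then 0 else if k = 1 then t - 1 else 2*k*(t-k)+k

lemma gbound_le (k t : ℕ) (hk : 1 ≤ k) : gbound k t ≤ (if k = 1 then t else 2*k*t) := by
  unfold gbound
  by_cases hk1 : k = 1
  · subst hk1; split_ifs <;> omega
  · simp only [if_neg hk1]
    split_ifs with h1
    · positivity
    · have h2 : 2*k*(t-k) ≤ 2*k*t := Nat.mul_le_mul_left _ (Nat.sub_le _ _)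
      have h3 : k ≤ 2*k*t := by
        have : 1 ≤ t := by omega
        calc k ≤ 2*k*1 := by omega
        _ ≤ 2*k*t := Nat.mul_le_mul_left _ this
      -- k ≤ t so 2k(t-k) + k ≤ 2kt
      have h4 : 2*k*(t-k) + 2*k*k ≤ 2*k*t := by
        have := Nat.mul_le_mul_left (2*k) (le_refl t)
        have heq : 2*k*(t-k) + 2*k*k = 2*k*t := by
          rw [← Nat.mul_add, Nat.sub_add_cancel (by omega)]
        omega
      nlinarith
  
lemma gbound_step {k tF tS tM : ℕ} (hk : 1 ≤ k) (hF : 1 ≤ tF) (hM : 1 ≤ tM)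
    (hS : tS ≤ k - 1) (hdeg : k ≤ tF + tS + tM) :
    gbound k (tF + tS) + gbound k (tM + tS) + k ≤ gbound k (tF + tS + tM) := by
  by_cases hk1 : k = 1
  · subst hk1
    have htS : tS = 0 := by omega
    subst htS
    simp only [gbound]
    split_ifs <;> omega
  · have hk2 : 2 ≤ k := by omega
    simp only [gbound, if_neg hk1]
    have hT : ¬ (tF + tS + tM < k) := by omega
    rw [if_neg hT]
    rcases Nat.lt_or_ge (tF + tS) k with hp | hp <;> rcases Nat.lt_or_ge (tM + tS) k with hq | hq
    · rw [if_pos hp, if_pos hq]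
      have h0 : (0:ℕ) ≤ 2*k*(tF+tS+tM-k) := Nat.zero_le _
      omega
    · rw [if_pos hp, if_neg (by omega)]
      have h1 : (tM + tS - k) + 1 ≤ tF + tS + tM - k := by omega
      have h2 := Nat.mul_le_mul_left (2*k) h1
      rw [Nat.mul_add, Nat.mul_one] at h2
      omega
    · rw [if_neg (by omega), if_pos hq]
      have h1 : (tF + tS - k) + 1 ≤ tF + tS + tM - k := by omega
      have h2 := Nat.mul_le_mul_left (2*k) h1
      rw [Nat.mul_add, Nat.mul_one] at h2
      omega
    · rw [if_neg (by omega), if_neg (by omega)]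
      have h1 : (tF + tS - k) + (tM + tS - k) + 1 ≤ tF + tS + tM - k := by omega
      have h2 := Nat.mul_le_mul_left (2*k) h1
      rw [Nat.mul_add, Nat.mul_add, Nat.mul_one] at h2
      omega

variable {V : Type*} [Finite V]

/-- The key recursive counting bound: if every vertex of `X` has degree at least `k` and
carries a separation package, then the number of vertices of `X` with neighborhood inside
a set `T ⊆ Y` is at most `gbound k |T|`. -/
lemma rec_bound (G : SimpleGraph V) (k : ℕ) (hk : 1 ≤ k) (X Y : Set V)
    (Hdeg : ∀ u ∈ X, k ≤ (G.neighborSet u).ncard)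
    (Hpack : ∀ u ∈ X, HasPack G k X Y u) :
    ∀ (t : ℕ) (T : Set V), T ⊆ Y → T.ncard = t →
    {u | u ∈ X ∧ G.neighborSet u ⊆ T}.ncard ≤ gbound k t := by
  intro t
  induction t using Nat.strong_induction_on with
  | _ t ih =>
  intro T hTY hTcard
  set U := {u | u ∈ X ∧ G.neighborSet u ⊆ T} with hU
  rcases Set.eq_empty_or_nonempty U with hUe | ⟨u₀, hu₀⟩
  · rw [hUe, Set.ncard_empty]; exact Nat.zero_le _
  obtain ⟨hu₀X, hu₀T⟩ := hu₀
  obtain ⟨F, M, hdisj, hcross, hNF, hNM, hSX, hSY⟩ := Hpack u₀ hu₀X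
  set S := (F ∪ M)ᶜ with hS
  have hcover : ∀ w : V, w ∈ F ∨ w ∈ M ∨ w ∈ S := by
    intro w
    by_cases h1 : w ∈ F
    · exact Or.inl h1
    by_cases h2 : w ∈ M
    · exact Or.inr (Or.inl h2)
    · exact Or.inr (Or.inr (fun hw => hw.elim h1 h2))
  have hdisjFS : Disjoint F S := (disjoint_compl_right).mono_left Set.subset_union_left
  have hdisjMS : Disjoint M S := (disjoint_compl_right).mono_left Set.subset_union_right
  -- partition the cardinality of T
  set tF := (T ∩ F).ncard with htF
  set tM := (T ∩ M).ncard with htM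
  set tS := (T ∩ S).ncard with htS
  have hsplitT : t = tF + tS + tM := by
    have hTeq : T = (T ∩ F) ∪ ((T ∩ S) ∪ (T ∩ M)) := by
      ext w
      simp only [Set.mem_union, Set.mem_inter_iff]
      constructor
      · intro hw
        rcases hcover w with h | h | h
        · exact Or.inl ⟨hw, h⟩
        · exact Or.inr (Or.inr ⟨hw, h⟩)
        · exact Or.inr (Or.inl ⟨hw, h⟩)
      · rintro (⟨hw, -⟩ | ⟨hw, -⟩ | ⟨hw, -⟩) <;> exact hw
    rw [← hTcard, hTeq, Set.ncard_union_eq ?_ (Set.toFinite _) (Set.toFinite _),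
      Set.ncard_union_eq ?_ (Set.toFinite _) (Set.toFinite _)]
    · ring
    · exact (hdisjMS.symm.mono Set.inter_subset_right Set.inter_subset_right)
    · rw [Set.disjoint_union_right]
      exact ⟨hdisjFS.mono Set.inter_subset_right Set.inter_subset_right,
        hdisj.mono Set.inter_subset_right Set.inter_subset_right⟩
  have h1F : 1 ≤ tF := by
    obtain ⟨w, hwN, hwF⟩ := hNF
    exact (Set.ncard_pos (Set.toFinite _)).2 ⟨w, hu₀T hwN, hwF⟩
  have h1M : 1 ≤ tM := by
    obtain ⟨w, hwN, hwM⟩ := hNM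
    exact (Set.ncard_pos (Set.toFinite _)).2 ⟨w, hu₀T hwN, hwM⟩
  have hSk : tS ≤ k - 1 := by
    refine le_trans (Set.ncard_le_ncard ?_ (Set.toFinite _)) hSY
    exact fun w hw => ⟨hw.2, hTY hw.1⟩
  have hdegT : k ≤ t := by
    rw [← hTcard]
    exact le_trans (Hdeg u₀ hu₀X) (Set.ncard_le_ncard hu₀T (Set.toFinite _))
  -- split U
  have hUsub : U ⊆ (U ∩ F) ∪ ((U ∩ M) ∪ (U ∩ S)) := by
    intro w hw
    rcases hcover w with h | h | h
    · exact Or.inl ⟨hw, h⟩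
    · exact Or.inr (Or.inl ⟨hw, h⟩)
    · exact Or.inr (Or.inr ⟨hw, h⟩)
  have hcardU : U.ncard ≤ (U ∩ F).ncard + (U ∩ M).ncard + (U ∩ S).ncard := by
    refine le_trans (Set.ncard_le_ncard hUsub (Set.toFinite _)) ?_
    refine le_trans (Set.ncard_union_le _ _) ?_
    have := Set.ncard_union_le (U ∩ M) (U ∩ S)
    omega
  -- bound the S part
  have hUS : (U ∩ S).ncard ≤ k := by
    refine le_trans (Set.ncard_le_ncard ?_ (Set.toFinite _)) hSX
    exact fun w hw => ⟨hw.2, hw.1.1⟩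
  -- bound the F part via induction
  have hUF : (U ∩ F).ncard ≤ gbound k (tF + tS) := by
    have hsub : U ∩ F ⊆ {u | u ∈ X ∧ G.neighborSet u ⊆ T ∩ (F ∪ S)} := by
      rintro w ⟨⟨hwX, hwT⟩, hwF⟩
      refine ⟨hwX, fun z hz => ⟨hwT hz, ?_⟩⟩
      rcases hcover z with h | h | h
      · exact Or.inl h
      · exact absurd hz (fun hzz => hcross w hwF z h hzz)
      · exact Or.inr h
    have hcard' : (T ∩ (F ∪ S)).ncard = tF + tS := by
      rw [Set.inter_union_distrib_left, Set.ncard_union_eq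
        (hdisjFS.mono Set.inter_subset_right Set.inter_subset_right)
        (Set.toFinite _) (Set.toFinite _)]
    have hlt : tF + tS < t := by omega
    refine le_trans (Set.ncard_le_ncard hsub (Set.toFinite _)) ?_
    exact ih (tF + tS) hlt (T ∩ (F ∪ S)) (fun w hw => hTY hw.1) hcard'
  -- bound the M part via induction
  have hUM : (U ∩ M).ncard ≤ gbound k (tM + tS) := by
    have hsub : U ∩ M ⊆ {u | u ∈ X ∧ G.neighborSet u ⊆ T ∩ (M ∪ S)} := by
      rintro w ⟨⟨hwX, hwT⟩, hwM⟩
      refine ⟨hwX, fun z hz => ⟨hwT hz, ?_⟩⟩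
      rcases hcover z with h | h | h
      · exact absurd hz.symm (fun hzz => hcross z h w hwM hzz)
      · exact Or.inl h
      · exact Or.inr h
    have hcard' : (T ∩ (M ∪ S)).ncard = tM + tS := by
      rw [Set.inter_union_distrib_left, Set.ncard_union_eq
        (hdisjMS.mono Set.inter_subset_right Set.inter_subset_right)
        (Set.toFinite _) (Set.toFinite _)]
    have hlt : tM + tS < t := by omega
    refine le_trans (Set.ncard_le_ncard hsub (Set.toFinite _)) ?_
    exact ih (tM + tS) hlt (T ∩ (M ∪ S)) (fun w hw => hTY hw.1) hcard'
  have := gbound_step (tF := tF) (tS := tS) (tM := tM) hk h1F h1M hSk (by omega)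
  rw [hsplitT]
  omega

end Recursion
section Assembly

variable {V : Type*} [Finite V] {G : SimpleGraph V} {A B : Set V} {k : ℕ}

lemma SimpleGraph.IsBipartitionOf.induce_bip (h : G.IsBipartitionOf A B) (s : Set V) :
    (G.induce s).IsBipartitionOf (Subtype.val ⁻¹' A) (Subtype.val ⁻¹' B) :=
  ⟨by rw [← Set.preimage_union, h.1, Set.preimage_univ], h.2.1.preimage _,
   fun a b hadj => h.2.2 a.1 b.1 hadj⟩

/-- Bound for one side via the recursion. -/
lemma side_bound (h : CritBiconn k G A B) (hk : 1 ≤ k) (hB1 : k + 1 ≤ B.ncard)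
    (T : Set V) (hT : T ⊆ A) :
    {u | u ∈ B ∧ G.neighborSet u ⊆ T}.ncard ≤ gbound k T.ncard :=
  rec_bound G k hk B A (fun u hu => mindeg_A h.1.symm hk hu)
    (fun u hu => pack_of_crit h.symm hk hu hB1) T.ncard T hT rfl

lemma gbound_self (k : ℕ) (hk : 1 ≤ k) : gbound k k ≤ k := by
  simp only [gbound, Nat.sub_self, Nat.mul_zero, Nat.zero_add]
  split_ifs <;> omega

theorem tau_bound_crit_biconn' (h : CritBiconn k G A B)
    (C : Set V) (hC : IsVertexCover G C) :
    Nat.card V ≤ 2 * k ^ 2 * Nat.card C := by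
  classical
  rcases Nat.eq_zero_or_pos k with hk0 | hk
  · -- k = 0 : V must be empty
    subst hk0
    have hVempty : IsEmpty V := by
      by_contra hne
      rw [not_isEmpty_iff] at hne
      obtain ⟨v⟩ := hne
      exact h.2 v ⟨h.1.1.induce_bip _, Nat.zero_le _, Nat.zero_le _,
        fun W hW _ => absurd hW (Nat.not_lt_zero _)⟩
    have : Nat.card V = 0 := Nat.card_of_isEmpty
    omega
  · have hbip := h.1.1
    have hcardA : k ≤ A.ncard := by
      rw [← Nat.card_coe_set_eq]; exact h.1.2.1
    have hcardB : k ≤ B.ncard := by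
      rw [← Nat.card_coe_set_eq]; exact h.1.2.2.1
    -- k ≤ |C|
    have hCk : k ≤ C.ncard := by
      by_cases hCuniv : ∃ u, u ∉ C
      · obtain ⟨u, huC⟩ := hCuniv
        have huAB : u ∈ A ∪ B := hbip.1 ▸ Set.mem_univ u
        have hNC : G.neighborSet u ⊆ C := fun w hw => (hC u w hw).resolve_left huC
        have hdeg : k ≤ (G.neighborSet u).ncard := by
          rcases huAB with hu | hu
          · exact mindeg_A h.1 hk hu
          · exact mindeg_A h.1.symm hk hu
        exact le_trans hdeg (Set.ncard_le_ncard hNC (Set.toFinite _))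
      · push_neg at hCuniv
        have : A ⊆ C := fun a _ => hCuniv a
        exact le_trans hcardA (Set.ncard_le_ncard this (Set.toFinite _))
    rw [Nat.card_coe_set_eq]
    by_cases hA1 : k + 1 ≤ A.ncard <;> by_cases hB1 : k + 1 ≤ B.ncard
    · -- main case: both sides large
      -- vertices of A outside C have all neighbors in C ∩ B
      have hAC : (A \ C).ncard ≤ gbound k (C ∩ B).ncard := by
        refine le_trans (Set.ncard_le_ncard ?_ (Set.toFinite _))
          (side_bound h.symm hk hA1 (C ∩ B) Set.inter_subset_right)
        rintro u ⟨huA, huC⟩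
        exact ⟨huA, fun w hw => ⟨(hC u w hw).resolve_left huC, bip_nbhd hbip huA hw⟩⟩
      have hBC : (B \ C).ncard ≤ gbound k (C ∩ A).ncard := by
        refine le_trans (Set.ncard_le_ncard ?_ (Set.toFinite _))
          (side_bound h hk hB1 (C ∩ A) Set.inter_subset_right)
        rintro u ⟨huB, huC⟩
        exact ⟨huB, fun w hw => ⟨(hC u w hw).resolve_left huC, bip_nbhd hbip.symm huB hw⟩⟩
      have hV : Nat.card V ≤ C.ncard + (A \ C).ncard + (B \ C).ncard := by
        rw [← Set.ncard_univ]
        have hsub : (Set.univ : Set V) ⊆ C ∪ ((A \ C) ∪ (B \ C)) := by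
          intro w _
          by_cases hw : w ∈ C
          · exact Or.inl hw
          · have : w ∈ A ∪ B := hbip.1 ▸ Set.mem_univ w
            rcases this with h' | h'
            · exact Or.inr (Or.inl ⟨h', hw⟩)
            · exact Or.inr (Or.inr ⟨h', hw⟩)
        refine le_trans (Set.ncard_le_ncard hsub (Set.toFinite _)) ?_
        refine le_trans (Set.ncard_union_le _ _) ?_
        have := Set.ncard_union_le (A \ C) (B \ C)
        omega
      have hCsplit : (C ∩ A).ncard + (C ∩ B).ncard = C.ncard := by
        rw [← Set.ncard_union_eq (hbip.2.1.mono Set.inter_subset_right Set.inter_subset_right)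
          (Set.toFinite _) (Set.toFinite _), ← Set.inter_union_distrib_left, hbip.1,
          Set.inter_univ]
      have hgB := gbound_le k (C ∩ B).ncard hk
      have hgA := gbound_le k (C ∩ A).ncard hk
      by_cases hk1 : k = 1
      · subst hk1
        norm_num at hgB hgA
        have : (2 : ℕ) * 1 ^ 2 * C.ncard = 2 * C.ncard := by norm_num
        omega
      · have hk2 : 2 ≤ k := by omega
        simp only [if_neg hk1] at hgB hgA
        set cA := (C ∩ A).ncard with hcA
        set cB := (C ∩ B).ncard with hcB
        have e2 : 2 * k * cB + 2 * k * cA = 2 * k * C.ncard := by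
          rw [← Nat.mul_add, (by omega : cB + cA = C.ncard)]
        have e3 : (1 + 2 * k) * C.ncard ≤ 2 * k ^ 2 * C.ncard := by
          refine Nat.mul_le_mul_right _ ?_
          nlinarith
        have e4 : (1 + 2 * k) * C.ncard = C.ncard + 2 * k * C.ncard := by ring
        set P := 2 * k * cB
        set Q := 2 * k * cA
        set R := 2 * k * C.ncard
        set S1 := (1 + 2 * k) * C.ncard
        set T1 := 2 * k ^ 2 * C.ncard
        omega
    · -- |B| = k, |A| ≥ k+1 : impossible
      exfalso
      have hBk : B.ncard = k := by omega
      have hsub : A ⊆ {u | u ∈ A ∧ G.neighborSet u ⊆ B} :=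
        fun u hu => ⟨hu, bip_nbhd hbip hu⟩
      have := le_trans (Set.ncard_le_ncard hsub (Set.toFinite _))
        (side_bound h.symm hk hA1 B (le_refl _))
      rw [hBk] at this
      have := gbound_self k hk
      omega
    · -- |A| = k, |B| ≥ k+1 : impossible
      exfalso
      have hAk : A.ncard = k := by omega
      have hsub : B ⊆ {u | u ∈ B ∧ G.neighborSet u ⊆ A} :=
        fun u hu => ⟨hu, bip_nbhd hbip.symm hu⟩
      have := le_trans (Set.ncard_le_ncard hsub (Set.toFinite _))
        (side_bound h hk hB1 A (le_refl _))
      rw [hAk] at this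
      have := gbound_self k hk
      omega
    · -- |A| = |B| = k : n ≤ 2k
      have hn : Nat.card V ≤ 2 * k := by
        rw [← Set.ncard_univ, ← hbip.1]
        refine le_trans (Set.ncard_union_le _ _) (by omega)
      have : 2 * k ≤ 2 * k ^ 2 * C.ncard := by nlinarith
      omega

end Assembly

/-- every vertex cover of a critically `k`-biconnected bipartite graph
has size at least `|V|/(2k²)`. -/
theorem tau_bound_crit_biconn {V : Type*} [Finite V] (k : ℕ)
    (G : SimpleGraph V) (A B : Set V) (h : CritBiconn k G A B)
    (C : Set V) (hC : IsVertexCover G C) :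
    Nat.card V ≤ 2 * k ^ 2 * Nat.card C := tau_bound_crit_biconn' h C hC
end

section
/- In the setting of the proof of Theorem 5.1: let G be a critically k-biconnected bipartite graph with |A|,|B| ≥ k+1, let T be a minimum vertex cover, X = V−T, let f be a pairing for X, let F be the simplification of the edge multiset E^f_X, and let G⁺ = G[T] ∪ F. Then for each edge uv ∈ F, the maximum number of pairwise internally disjoint u–v paths in G⁺ is at most 2k−1. -/
section Helpers

open SimpleGraph

/-- A path from `u` to `v` containing the edge `s(u,v)` is the single-edge path. -/
private lemma path_eq_single {V : Type*} {G : SimpleGraph V} {u v : V} (hne : u ≠ v)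
    (p : G.Walk u v) (hp : p.IsPath) (he : s(u, v) ∈ p.edges) :
    ∃ h : G.Adj u v, p = SimpleGraph.Walk.cons h SimpleGraph.Walk.nil := by
  cases p with
  | nil => exact absurd rfl hne
  | @cons _ c _ h q =>
    rw [SimpleGraph.Walk.edges_cons, List.mem_cons] at he
    rcases he with he | he
    · have hc : c = v := by
        rw [Sym2.eq_iff] at he
        rcases he with ⟨-, h2⟩ | ⟨h1, h2⟩
        · exact h2.symm
        · exact absurd h2.symm hne
      subst hc
      have hq : q = SimpleGraph.Walk.nil :=
        SimpleGraph.Walk.isPath_iff_eq_nil.1 hp.of_cons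
      exact ⟨h, by rw [hq]⟩
    · have hu : u ∈ q.support := SimpleGraph.Walk.fst_mem_support_of_mem_edges q he
      exact absurd hu ((SimpleGraph.Walk.cons_isPath_iff h q).1 hp).2

/-- Two internally disjoint `u`–`v` paths sharing an edge are equal. -/
private lemma eq_of_shared_edge {V : Type*} {G : SimpleGraph V} {u v : V} (hne : u ≠ v)
    (p q : G.Walk u v) (hp : p.IsPath) (hq : q.IsPath) {e : Sym2 V}
    (hep : e ∈ p.edges) (heq : e ∈ q.edges)
    (hdisj : ∀ z, z ∈ p.support → z ∈ q.support → z = u ∨ z = v) : p = q := by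
  induction e using Sym2.ind with
  | _ a b =>
    have hadj : G.Adj a b := SimpleGraph.Walk.adj_of_mem_edges p hep
    have ha : a = u ∨ a = v := hdisj a (SimpleGraph.Walk.fst_mem_support_of_mem_edges p hep)
      (SimpleGraph.Walk.fst_mem_support_of_mem_edges q heq)
    have hb : b = u ∨ b = v := hdisj b (SimpleGraph.Walk.snd_mem_support_of_mem_edges p hep)
      (SimpleGraph.Walk.snd_mem_support_of_mem_edges q heq)
    have he : s(a, b) = s(u, v) := by
      rcases ha with rfl | rfl <;> rcases hb with rfl | rfl
      · exact (hadj.ne rfl).elim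
      · rfl
      · exact Sym2.eq_swap
      · exact (hadj.ne rfl).elim
    rw [he] at hep heq
    obtain ⟨h1, hp1⟩ := path_eq_single hne p hp hep
    obtain ⟨h2, hq1⟩ := path_eq_single hne q hq heq
    rw [hp1, hq1]

/-- Every vertex of a walk is either the final vertex or has a neighbour. -/
private lemma walk_support_adj {V : Type*} {G : SimpleGraph V} :
    ∀ {a b : V} (p : G.Walk a b), ∀ z ∈ p.support, z = b ∨ ∃ y, G.Adj z y := by
  intro a b p
  induction p with
  | nil => intro z hz; left; simpa using hz
  | cons h q ih =>
    intro z hz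
    rw [SimpleGraph.Walk.support_cons, List.mem_cons] at hz
    rcases hz with rfl | hz
    · exact Or.inr ⟨_, h⟩
    · exact ih z hz

/-- Lifting a good walk in `Gp` (avoiding `S`, with all its non-`G` edges having witness
outside `S`) to reachability in `G − S`. -/
private lemma lift_reach {V : Type*} {G Gp : SimpleGraph V} {S : Set V} {F : Set (Sym2 V)}
    {w : Sym2 V → V} (hadjW : ∀ e ∈ F, ∀ x ∈ e, G.Adj (w e) x) :
    ∀ {a b : V} (p : Gp.Walk a b) (ha : a ∈ Sᶜ) (hb : b ∈ Sᶜ),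
    (∀ z ∈ p.support, z ∈ Sᶜ) →
    (∀ e ∈ p.edges, e ∈ G.edgeSet ∨ (e ∈ F ∧ w e ∈ Sᶜ)) →
    (G.induce Sᶜ).Reachable ⟨a, ha⟩ ⟨b, hb⟩ := by
  intro a b p
  induction p with
  | nil => intro ha hb _ _; exact SimpleGraph.Reachable.refl _
  | @cons a c b h q ih =>
    intro ha hb hsupp hedges
    have hc : c ∈ Sᶜ := hsupp c (by simp [SimpleGraph.Walk.support_cons])
    have hrest : (G.induce Sᶜ).Reachable ⟨c, hc⟩ ⟨b, hb⟩ :=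
      ih hc hb
        (fun z hz => hsupp z (by rw [SimpleGraph.Walk.support_cons]; exact List.mem_cons_of_mem _ hz))
        (fun e he => hedges e (by rw [SimpleGraph.Walk.edges_cons]; exact List.mem_cons_of_mem _ he))
    have hfirst : (G.induce Sᶜ).Reachable ⟨a, ha⟩ ⟨c, hc⟩ := by
      rcases hedges s(a, c) (by rw [SimpleGraph.Walk.edges_cons]; exact List.mem_cons_self)
        with hG | ⟨hFe, hwS⟩
      · exact SimpleGraph.Adj.reachable
          (show (G.induce Sᶜ).Adj ⟨a, ha⟩ ⟨c, hc⟩ from (SimpleGraph.mem_edgeSet G).1 hG)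
      · have hya : G.Adj (w s(a, c)) a := hadjW _ hFe a (Sym2.mem_mk_left a c)
        have hyc : G.Adj (w s(a, c)) c := hadjW _ hFe c (Sym2.mem_mk_right a c)
        exact (SimpleGraph.Adj.reachable
            (show (G.induce Sᶜ).Adj ⟨a, ha⟩ ⟨w s(a, c), hwS⟩ from hya.symm)).trans
          (SimpleGraph.Adj.reachable
            (show (G.induce Sᶜ).Adj ⟨w s(a, c), hwS⟩ ⟨c, hc⟩ from hyc))
    exact hfirst.trans hrest

end Helpers

/-- An essential separator of the `k`-biconnected bipartite graph `G`. -/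
def IsEssSep {V : Type*} [Finite V] (k : ℕ) (G : SimpleGraph V) (A B S : Set V) : Prop :=
  ((Nat.card ↥(S ∩ A) = k ∧ Nat.card ↥(S ∩ B) ≤ k - 1) ∨
   (Nat.card ↥(S ∩ B) = k ∧ Nat.card ↥(S ∩ A) ≤ k - 1)) ∧
  ¬ (G.induce Sᶜ).Connected ∧
  ∀ x ∈ S, ∀ y : ↥Sᶜ, ∃ z : ↥Sᶜ, (G.induce Sᶜ).Reachable y z ∧ G.Adj x ↑z

/-- `f` behaves as a pairing at `x`. -/
def PairingAt {V : Type*} [Finite V] (k : ℕ) (G : SimpleGraph V) (A B : Set V)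
    (f : V → V × V) (x : V) : Prop :=
  ∃ S : Set V, IsEssSep k G A B S ∧ x ∈ S ∧
    G.Adj x (f x).1 ∧ G.Adj x (f x).2 ∧
    ∃ (h1 : (f x).1 ∈ Sᶜ) (h2 : (f x).2 ∈ Sᶜ),
      ¬ (G.induce Sᶜ).Reachable ⟨(f x).1, h1⟩ ⟨(f x).2, h2⟩

/-- There exist `m` pairwise internally disjoint `u`–`v` paths in `G`. -/
def IntDisjPaths {V : Type*} (G : SimpleGraph V) (u v : V) (m : ℕ) : Prop :=
  ∃ P : Fin m → G.Path u v, Function.Injective P ∧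
    ∀ i j, i ≠ j → ∀ w, w ∈ (P i).val.support → w ∈ (P j).val.support → w = u ∨ w = v

/-- in the setting of the proof of Theorem 5.1, with `G` critically
`k`-biconnected, `T` a minimum vertex cover, `X = V − T`, `f` a pairing for `X`,
`F` the set of distinct pairs arising from `f`, and `G⁺ = G[T] ∪ F`, every edge
`uv ∈ F` admits at most `2k − 1` pairwise internally disjoint `u`–`v` paths in `G⁺`. -/
theorem local_connectivity_bound_in_Gplus {V : Type*} [Finite V] (k : ℕ)
    (G : SimpleGraph V) (A B : Set V) (hcrit : CritBiconn k G A B)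
    (hA : k + 1 ≤ Nat.card A) (hB : k + 1 ≤ Nat.card B)
    (T : Set V) (hTvc : IsVertexCover G T)
    (hTmin : ∀ C : Set V, IsVertexCover G C → T.ncard ≤ C.ncard)
    (f : V → V × V) (hf : ∀ x ∈ Tᶜ, PairingAt k G A B f x)
    (F : Set (Sym2 V)) (hF : F = {e | ∃ x ∈ Tᶜ, e = s((f x).1, (f x).2)})
    (Gplus : SimpleGraph V)
    (hGplus : Gplus = SimpleGraph.fromEdgeSet ({e ∈ G.edgeSet | ∀ x ∈ e, x ∈ T} ∪ F))
    (u v : V) (huv : s(u, v) ∈ F)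
    (m : ℕ) (hm : IntDisjPaths Gplus u v m) :
    m ≤ 2 * k - 1 := by
  classical
  obtain ⟨P, hPinj, hPdisj⟩ := hm
  -- choose a pairing witness for each edge of `F`
  have hwex : ∀ e : Sym2 V, ∃ x : V, e ∈ F → (x ∈ Tᶜ ∧ e = s((f x).1, (f x).2)) := by
    intro e
    by_cases he : e ∈ F
    · rw [hF] at he
      obtain ⟨x, hx, hxe⟩ := he
      exact ⟨x, fun _ => ⟨hx, hxe⟩⟩
    · exact ⟨u, fun h => absurd h he⟩
  choose w hw using hwex
  have hadjW : ∀ e ∈ F, ∀ x ∈ e, G.Adj (w e) x := by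
    intro e he x hx
    obtain ⟨hwT, hwe⟩ := hw e he
    obtain ⟨S', _, _, ha1, ha2, _⟩ := hf _ hwT
    rw [hwe, Sym2.mem_iff] at hx
    rcases hx with rfl | rfl
    · exact ha1
    · exact ha2
  -- the essential separator coming from the edge `uv`
  have huv' := huv
  rw [hF] at huv'
  obtain ⟨x₀, hx₀T, hx₀e⟩ := huv'
  obtain ⟨S, hSsep, hx₀S, hadj1, hadj2, h1, h2, hnr0⟩ := hf x₀ hx₀T
  have hmain : ∃ (hu : u ∈ Sᶜ) (hv : v ∈ Sᶜ), ¬ (G.induce Sᶜ).Reachable ⟨u, hu⟩ ⟨v, hv⟩ := by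
    rw [Sym2.eq_iff] at hx₀e
    rcases hx₀e with ⟨hu', hv'⟩ | ⟨hu', hv'⟩
    · subst hu'; subst hv'
      exact ⟨h1, h2, hnr0⟩
    · subst hu'; subst hv'
      exact ⟨h2, h1, fun hr => hnr0 hr.symm⟩
  obtain ⟨hu, hv, hnr⟩ := hmain
  have hune : u ≠ v := by
    intro h
    subst h
    exact hnr (SimpleGraph.Reachable.refl _)
  -- edge set of G⁺
  have hedge : ∀ e, e ∈ Gplus.edgeSet → (e ∈ G.edgeSet ∧ ∀ x ∈ e, x ∈ T) ∨ e ∈ F := by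
    intro e he
    rw [hGplus, SimpleGraph.edgeSet_fromEdgeSet] at he
    rcases he.1 with h | h
    · exact Or.inl h
    · exact Or.inr h
  -- all endpoints of F-edges lie in T
  have hFT : ∀ e ∈ F, ∀ x ∈ e, x ∈ T := by
    intro e he x hx
    obtain ⟨hwT, _⟩ := hw e he
    rcases hTvc _ _ (hadjW e he x hx) with h | h
    · exact absurd h hwT
    · exact h
  have hadjT : ∀ a b : V, Gplus.Adj a b → a ∈ T := by
    intro a b hab
    have he : s(a, b) ∈ Gplus.edgeSet := hab
    rcases hedge _ he with ⟨_, h2⟩ | h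
    · exact h2 a (Sym2.mem_mk_left a b)
    · exact hFT _ h a (Sym2.mem_mk_left a b)
  have hvT : v ∈ T := hFT _ huv v (Sym2.mem_mk_right u v)
  have hsuppT : ∀ i : Fin m, ∀ z ∈ (P i).val.support, z ∈ T := by
    intro i z hz
    rcases walk_support_adj (P i).val z hz with rfl | ⟨y, hy⟩
    · exact hvT
    · exact hadjT _ _ hy
  -- each path hits the separator
  have hkey : ∀ i : Fin m, ∃ z ∈ S,
      (z ∈ (P i).val.support) ∨ (z ∈ Tᶜ ∧ ∃ e ∈ (P i).val.edges, e ∈ F ∧ w e = z) := by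
    intro i
    by_contra hcon
    apply hnr
    apply lift_reach hadjW (P i).val hu hv
    · intro z hz
      intro hzS
      exact hcon ⟨z, hzS, Or.inl hz⟩
    · intro e he
      have heG : e ∈ Gplus.edgeSet := SimpleGraph.Walk.edges_subset_edgeSet (P i).val he
      rcases hedge _ heG with ⟨hG, _⟩ | hFe
      · exact Or.inl hG
      · refine Or.inr ⟨hFe, ?_⟩
        intro hwS
        exact hcon ⟨w e, hwS, Or.inr ⟨(hw e hFe).1, e, he, hFe, rfl⟩⟩
  choose g hgS hgor using hkey
  -- the hits are pairwise distinct
  have hginj : Function.Injective g := by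
    intro i j hij
    by_contra hne
    rcases hgor i with hi | ⟨hiT, e1, he1, hF1, hw1⟩ <;>
      rcases hgor j with hj | ⟨hjT, e2, he2, hF2, hw2⟩
    · rcases hPdisj i j hne (g i) hi (hij ▸ hj) with h | h
      · exact hu (h ▸ hgS i)
      · exact hv (h ▸ hgS i)
    · exact hjT (hij ▸ hsuppT i _ hi)
    · exact hiT (hij.symm ▸ hsuppT j _ hj)
    · have he12 : e1 = e2 := by
        have ha1 : e1 = s((f (w e1)).1, (f (w e1)).2) := (hw _ hF1).2
        have ha2 : e2 = s((f (w e2)).1, (f (w e2)).2) := (hw _ hF2).2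
        rw [ha1, ha2, hw1, hw2, hij]
      subst he12
      have : (P i).val = (P j).val :=
        eq_of_shared_edge hune (P i).val (P j).val (P i).2 (P j).2 he1 he2
          (fun z hz1 hz2 => hPdisj i j hne z hz1 hz2)
      exact hne (hPinj (Subtype.ext this))
  -- counting
  have hcard : m ≤ Nat.card S := by
    have hinj2 : Function.Injective (fun i : Fin m => (⟨g i, hgS i⟩ : S)) := by
      intro i j h
      exact hginj (congrArg Subtype.val h)
    have := Nat.card_le_card_of_injective _ hinj2
    rwa [Nat.card_eq_fintype_card (α := Fin m), Fintype.card_fin] at this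
  obtain ⟨hSc, -, -⟩ := hSsep
  obtain ⟨⟨hAB, hABd, -⟩, -, -, -⟩ := hcrit.1
  have hSsplit : (S ∩ A) ∪ (S ∩ B) = S := by
    rw [← Set.inter_union_distrib_left, hAB, Set.inter_univ]
  have hdisj2 : Disjoint (S ∩ A) (S ∩ B) :=
    hABd.mono Set.inter_subset_right Set.inter_subset_right
  have hsum : S.ncard = (S ∩ A).ncard + (S ∩ B).ncard := by
    conv_lhs => rw [← hSsplit]
    exact Set.ncard_union_eq hdisj2 (Set.toFinite _) (Set.toFinite _)
  have hcardS : Nat.card S ≤ 2 * k - 1 := by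
    rw [Nat.card_coe_set_eq, hsum]
    rw [Nat.card_coe_set_eq, Nat.card_coe_set_eq] at hSc
    rcases hSc with ⟨hc1, hc2⟩ | ⟨hc1, hc2⟩ <;> omega
  exact le_trans hcard hcardS
end

section
/- Let d ≥ 1 and let G = (V,E) be a simple H_d-independent graph, i.e., the rows of the matrix H(G,p) indexed by E are linearly independent for a generic p : V → ℝ^d. Let G′ be obtained from G by adding a new vertex v joined to d vertices v₁,…,v_d of V (a simple 0-extension). Then G′ is H_d-independent. -/
open Classical

/-- `p` is generic: the multiset of all coordinates of the points `p v` is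
algebraically independent over `ℚ`. -/
def Generic (d : ℕ) {ν : Type*} (p : ν → Fin d → ℝ) : Prop :=
  AlgebraicIndependent ℚ (fun vi : ν × Fin d => p vi.1 vi.2)

/-- The row of the hyperconnectivity matrix corresponding to an edge with first
endpoint `a` and second endpoint `b`: it has `p b` in the block of columns of `a`,
`−p a` in the block of columns of `b`, and `0` elsewhere. -/
noncomputable def hRow (d : ℕ) {ν : Type*} (p : ν → Fin d → ℝ) (a b : ν) :
    ν × Fin d → ℝ :=
  fun wi => (if wi.1 = a then p b wi.2 else 0) + (if wi.1 = b then -(p a wi.2) else 0)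

/-- The row of the hyperconnectivity matrix of an edge `e`, with the endpoints
ordered by the fixed linear order on the vertices. -/
noncomputable def eRow (d : ℕ) {ν : Type*} [LinearOrder ν] (p : ν → Fin d → ℝ)
    (e : Sym2 ν) : ν × Fin d → ℝ :=
  hRow d p
    (Sym2.lift ⟨fun a b => min a b, fun a b => min_comm a b⟩ e)
    (Sym2.lift ⟨fun a b => max a b, fun a b => max_comm a b⟩ e)

/-- The rows of `H(G,p)` indexed by the edges of `G` are linearly independent. -/
def HIndep (d : ℕ) {ν : Type*} [LinearOrder ν] (G : SimpleGraph ν)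
    (p : ν → Fin d → ℝ) : Prop :=
  LinearIndependent ℝ (fun e : G.edgeSet => eRow d p e.1)

lemma rowsIndep {ν : Type*} (d : ℕ) (p : ν → Fin d → ℝ)
    (hp : AlgebraicIndependent ℚ (fun vi : ν × Fin d => p vi.1 vi.2))
    (D : Finset ν) (hD : D.card = d) :
    LinearIndependent ℝ (fun u : {x // x ∈ D} => (fun i => p u i : Fin d → ℝ)) := by
  classical
  let eD : Fin d ≃ {x // x ∈ D} := ((D.equivFin).trans (finCongr hD)).symm
  set M : Matrix (Fin d) (Fin d) ℝ := Matrix.of fun i j => p (eD i) j with hM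
  set f : Fin d × Fin d → ℝ := fun ij => p (eD ij.1) ij.2 with hf
  have hinj : Function.Injective (fun ij : Fin d × Fin d => (((eD ij.1 : {x // x ∈ D}) : ν), ij.2)) := by
    intro a b h
    simp only [Prod.mk.injEq] at h
    exact Prod.ext (eD.injective (Subtype.coe_injective h.1)) h.2
  have hsub : AlgebraicIndependent ℚ f := by
    have h2 := hp.comp (fun ij : Fin d × Fin d => (((eD ij.1 : {x // x ∈ D}) : ν), ij.2)) hinj
    exact h2
  have hmap : (MvPolynomial.aeval f).mapMatrix
      (Matrix.mvPolynomialX (Fin d) (Fin d) ℚ) = M := by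
    ext i j
    simp [hf, hM]
  have hdet : M.det ≠ 0 := by
    intro h0
    have h1 : (MvPolynomial.aeval f)
        (Matrix.mvPolynomialX (Fin d) (Fin d) ℚ).det = M.det := by
      rw [AlgHom.map_det, hmap]
    exact Matrix.det_mvPolynomialX_ne_zero (Fin d) ℚ
      (hsub.eq_zero_of_aeval_eq_zero _ (h1.trans h0))
  have hrows : LinearIndependent ℝ (fun i => M i) :=
    Matrix.linearIndependent_rows_iff_isUnit.mpr
      ((Matrix.isUnit_iff_isUnit_det M).mpr (isUnit_iff_ne_zero.mpr hdet))
  have hc := hrows.comp eD.symm eD.symm.injective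
  convert hc using 1
  funext u j
  simp [hM, Function.comp, Matrix.of_apply]

lemma coeffZero {ν : Type*} (d : ℕ) (p : ν → Fin d → ℝ)
    (hp : AlgebraicIndependent ℚ (fun vi : ν × Fin d => p vi.1 vi.2))
    (D : Finset ν) (hD : D.card = d) (c : ν → ℝ)
    (h : ∀ i, ∑ u ∈ D, c u * p u i = 0) : ∀ u ∈ D, c u = 0 := by
  classical
  have L := rowsIndep d p hp D hD
  rw [linearIndependent_iff'] at L
  have key := L Finset.univ (fun u => c u) ?_
  · intro u hu
    exact key ⟨u, hu⟩ (Finset.mem_univ _)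
  · funext i
    have : (∑ u : {x // x ∈ D}, c ↑u • (fun i => p (↑u) i)) i
        = ∑ u : {x // x ∈ D}, c ↑u * p (↑u) i := by
      simp [Finset.sum_apply]
    rw [this]
    rw [Finset.univ_eq_attach, Finset.sum_attach D (fun u => c u * p u i)]
    exact h i

lemma eRow_new {ν : Type*} [LinearOrder ν] (d : ℕ) (p : ν → Fin d → ℝ)
    {v u : ν} (h : v ≠ u) (i : Fin d) :
    eRow d p s(v,u) (v,i) = (if v ≤ u then 1 else -1) * p u i := by
  rcases le_or_gt v u with hle | hlt
  · have h1 : min v u = v := min_eq_left hle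
    have h2 : max v u = u := max_eq_right hle
    simp [eRow, hRow, h1, h2, h, if_pos hle]
  · have h1 : min v u = u := min_eq_right hlt.le
    have h2 : max v u = v := max_eq_left hlt.le
    simp [eRow, hRow, h1, h2, h, if_neg (not_le.mpr hlt)]

lemma eRow_old {ν : Type*} [LinearOrder ν] (d : ℕ) (p : ν → Fin d → ℝ)
    {v : ν} {e : Sym2 ν} (h : v ∉ e) (i : Fin d) :
    eRow d p e (v,i) = 0 := by
  induction e using Sym2.ind with
  | _ a b =>
    simp only [Sym2.mem_iff, not_or] at h
    have h1 : v ≠ min a b := by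
      rcases min_choice a b with h' | h' <;> rw [h'] <;> [exact h.1; exact h.2]
    have h2 : v ≠ max a b := by
      rcases max_choice a b with h' | h' <;> rw [h'] <;> [exact h.1; exact h.2]
    simp [eRow, hRow, h1, h2]

/-- a simple 0-extension (adding a new vertex `v` joined to `d`
vertices of `V`) preserves `H_d`-independence. -/
theorem hIndep_zero_extension {ν : Type*} [LinearOrder ν] (d : ℕ) (hd : 1 ≤ d)
    (G : SimpleGraph ν)
    (hG : ∀ p : ν → Fin d → ℝ, Generic d p → HIndep d G p)
    (v : ν) (hv : ∀ w, ¬ G.Adj v w)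
    (D : Finset ν) (hD : D.card = d) (hvD : v ∉ D)
    (G' : SimpleGraph ν)
    (hG' : G' = G ⊔ SimpleGraph.fromEdgeSet {e | ∃ u ∈ D, e = s(v, u)}) :
    ∀ p : ν → Fin d → ℝ, Generic d p → HIndep d G' p := by
  classical
  intro p hp
  rw [HIndep, linearIndependent_iff']
  intro s g hsum e he
  -- every edge of G' is an old edge or a new edge
  have hsplit : ∀ es : Sym2 ν, es ∈ G'.edgeSet →
      es ∈ G.edgeSet ∨ ∃ u ∈ D, es = s(v,u) := by
    intro es hes
    rw [hG', SimpleGraph.edgeSet_sup] at hes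
    rcases hes with h2 | h2
    · exact Or.inl h2
    · rw [SimpleGraph.edgeSet_fromEdgeSet] at h2
      exact Or.inr h2.1
  -- v is not in any old edge
  have hGv : ∀ e'' ∈ G.edgeSet, v ∉ e'' := by
    intro e'' hmem hvmem
    induction e'' using Sym2.ind with
    | _ a b =>
      rw [SimpleGraph.mem_edgeSet] at hmem
      rcases Sym2.mem_iff.mp hvmem with rfl | rfl
      · exact hv b hmem
      · exact hv a hmem.symm
  -- evaluate the relation at column (v, i)
  have hval : ∀ i, ∑ e' ∈ s, g e' * eRow d p (e' : Sym2 ν) (v,i) = 0 := by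
    intro i
    have h3 := congrFun hsum (v,i)
    simpa [Finset.sum_apply] using h3
  set fib : ν → Finset G'.edgeSet :=
    fun u => s.filter (fun e' => (e' : Sym2 ν) = s(v,u)) with hfibdef
  have hvne : ∀ u ∈ D, v ≠ u := fun u hu h => hvD (h ▸ hu)
  -- the coefficient of each new edge is zero
  have hfib_sum : ∀ u ∈ D, ∑ e' ∈ fib u, g e' = 0 := by
    set c : ν → ℝ := fun u => (∑ e' ∈ fib u, g e') * (if v ≤ u then 1 else -1) with hcdef
    have hc : ∀ i, ∑ u ∈ D, c u * p u i = 0 := by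
      intro i
      have step1 : ∑ u ∈ D, c u * p u i
          = ∑ u ∈ D, ∑ e' ∈ fib u, g e' * eRow d p (e' : Sym2 ν) (v,i) := by
        refine Finset.sum_congr rfl fun u hu => ?_
        rw [hcdef, mul_assoc, Finset.sum_mul]
        refine Finset.sum_congr rfl fun e' he' => ?_
        have heq : (e' : Sym2 ν) = s(v,u) := by
          have := Finset.mem_filter.mp he'
          exact this.2
        rw [heq, eRow_new d p (hvne u hu) i]
      have hdisj : (D : Set ν).PairwiseDisjoint fib := by
        intro u hu u' hu' hne
        refine Finset.disjoint_left.mpr fun x hx hx' => ?_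
        have h1 : (x : Sym2 ν) = s(v,u) := (Finset.mem_filter.mp hx).2
        have h2 : (x : Sym2 ν) = s(v,u') := (Finset.mem_filter.mp hx').2
        rw [h1] at h2
        rcases Sym2.eq_iff.mp h2 with ⟨_, h3⟩ | ⟨h3, _⟩
        · exact hne h3
        · exact hvD (h3 ▸ hu')
      have step2 : ∑ u ∈ D, ∑ e' ∈ fib u, g e' * eRow d p (e' : Sym2 ν) (v,i)
          = ∑ e' ∈ D.biUnion fib, g e' * eRow d p (e' : Sym2 ν) (v,i) :=
        (Finset.sum_biUnion hdisj).symm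
      have hsub : D.biUnion fib ⊆ s := by
        intro x hx
        rcases Finset.mem_biUnion.mp hx with ⟨u, _, hxu⟩
        exact (Finset.mem_filter.mp (hfibdef ▸ hxu)).1
      have step3 : ∑ e' ∈ D.biUnion fib, g e' * eRow d p (e' : Sym2 ν) (v,i)
          = ∑ e' ∈ s, g e' * eRow d p (e' : Sym2 ν) (v,i) := by
        refine Finset.sum_subset hsub fun x hxs hxn => ?_
        rcases hsplit (x : Sym2 ν) x.2 with hold | ⟨u, hu, heq⟩
        · rw [eRow_old d p (hGv _ hold) i, mul_zero]
        · refine absurd (Finset.mem_biUnion.mpr ⟨u, hu, ?_⟩) hxn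
          rw [hfibdef]
          exact Finset.mem_filter.mpr ⟨hxs, heq⟩
      rw [step1, step2, step3]
      exact hval i
    intro u hu
    have h4 := coeffZero d p hp D hD c hc u hu
    rw [hcdef] at h4
    rcases mul_eq_zero.mp h4 with h5 | h5
    · exact h5
    · exfalso
      by_cases hle : v ≤ u <;> simp [hle] at h5
  -- coefficients of new edges vanish
  have hgnew : ∀ e' ∈ s, ∀ u ∈ D, (e' : Sym2 ν) = s(v,u) → g e' = 0 := by
    intro e' hmem u hu heq
    have hsing : fib u = {e'} := by
      refine Finset.eq_singleton_iff_unique_mem.mpr ⟨Finset.mem_filter.mpr ⟨hmem, heq⟩, ?_⟩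
      intro x hx
      exact Subtype.ext ((Finset.mem_filter.mp hx).2.trans heq.symm)
    have h6 := hfib_sum u hu
    rwa [hsing, Finset.sum_singleton] at h6
  rcases hsplit (e : Sym2 ν) e.2 with hold | ⟨u, hu, heq⟩
  swap
  · exact hgnew e he u hu heq
  -- old edge case
  · set sOld : Finset G'.edgeSet :=
      s.filter (fun e' => (e' : Sym2 ν) ∈ G.edgeSet) with hsOld
    have hsum2 : ∑ e' ∈ sOld, g e' • eRow d p (e' : Sym2 ν) = 0 := by
      rw [hsOld, Finset.sum_filter_of_ne, hsum]
      intro x hx hne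
      rcases hsplit (x : Sym2 ν) x.2 with h7 | ⟨u, hu, heq'⟩
      · exact h7
      · exact absurd (by rw [hgnew x hx u hu heq', zero_smul]) hne
    have LI := hG p hp
    rw [HIndep, linearIndependent_iff'] at LI
    have heOld : e ∈ sOld := Finset.mem_filter.mpr ⟨he, hold⟩
    set F : {x // x ∈ sOld} → G.edgeSet :=
      fun x => ⟨(x.1 : Sym2 ν), (Finset.mem_filter.mp x.2).2⟩ with hF
    have hFinj : Function.Injective F := by
      intro x x' h8
      have h9 : ((F x : G.edgeSet) : Sym2 ν) = ((F x' : G.edgeSet) : Sym2 ν) :=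
        congrArg Subtype.val h8
      exact Subtype.ext (Subtype.ext h9)
    set g' : G.edgeSet → ℝ := fun y =>
      g ⟨(y : Sym2 ν), by rw [hG', SimpleGraph.edgeSet_sup]; exact Or.inl y.2⟩ with hg'
    have hsum3 : ∑ y ∈ sOld.attach.image F, g' y • eRow d p (y : Sym2 ν) = 0 := by
      rw [Finset.sum_image (fun x _ x' _ h => hFinj h)]
      have hcongr : ∀ x ∈ sOld.attach,
          g' (F x) • eRow d p ((F x : G.edgeSet) : Sym2 ν)
            = g x.1 • eRow d p ((x.1 : Sym2 ν)) := by
        intro x _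
        rfl
      rw [Finset.sum_congr rfl hcongr,
        Finset.sum_attach sOld (fun e' => g e' • eRow d p (e' : Sym2 ν))]
      exact hsum2
    have h9 := LI (sOld.attach.image F) g' hsum3 (F ⟨e, heOld⟩)
      (Finset.mem_image_of_mem F (Finset.mem_attach _ _))
    exact h9
end
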